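/- arXiv:2009.03038 — 6 statements merged into one kernel-verified Lean document; each statement's English description precedes it below -/
import Mathlib

section
/- For any random variable A with finite support of size m > 16, the squared ℓ2-norm of its distribution plus its Shannon entropy is at most 1/m + log m, i.e., ‖A‖_2^2 + H(A) ≤ 1/m + log m (logarithms in base 2). -/
/-!
Put `t_a = m μ(a)` and `klFun t = t log t + 1 - t`. Summing `klFun (t_a)` gives `m` times the
divergence `log m - H(μ)` from the uniform distribution, and summing `(t_a - 1)²` gives
`m (m ‖μ‖₂² - 1)`. So the theorem follows from the pointwise bound
`log 2 / m * (t - 1)² ≤ klFun t` on `[0, m]`: for `t ≤ 6` it comes from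
`(√t - 1)² ≤ klFun t`, for `t ≥ 6` from `log t ≥ 1 + log 2` and `t - 1 ≤ m`.
-/

open Finset Real InformationTheory

lemma sq_sqrt_sub_one_le_klFun {t : ℝ} (ht : 0 ≤ t) : (√t - 1) ^ 2 ≤ klFun t := by
  rcases ht.eq_or_lt with rfl | ht
  · simp [klFun_zero]
  have hs : 0 < √t := sqrt_pos.2 ht
  have hst : √t ^ 2 = t := sq_sqrt ht.le
  have hlog : log t = 2 * log √t := by rw [log_sqrt ht.le]; ring
  -- `log s ≥ 1 - s⁻¹` at `s = √t` gives `t log t ≥ 2t - 2√t`.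
  have h := mul_le_mul_of_nonneg_left (one_sub_inv_le_log_of_pos hs) (sq_nonneg √t)
  rw [mul_sub, mul_one, sq, mul_assoc, mul_inv_cancel₀ hs.ne', mul_one, ← sq, hst] at h
  rw [klFun_apply, hlog]
  nlinarith

lemma log_two_mul_sq_sub_one_le_klFun_of_le_six {t : ℝ} (ht : 0 ≤ t) (ht6 : t ≤ 6) :
    log 2 * (t - 1) ^ 2 ≤ 9 * klFun t := by
  have hst : √t ^ 2 = t := sq_sqrt ht
  have hs : √t ≤ 5 / 2 := by nlinarith [sqrt_nonneg t]
  have hcoeff : log 2 * (√t + 1) ^ 2 ≤ 9 := by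
    nlinarith [log_two_lt_d9, log_pos one_lt_two, sqrt_nonneg t]
  calc log 2 * (t - 1) ^ 2 = log 2 * (√t + 1) ^ 2 * (√t - 1) ^ 2 := by
        linear_combination -log 2 * (t + √t ^ 2 - 2) * hst
    _ ≤ 9 * (√t - 1) ^ 2 := mul_le_mul_of_nonneg_right hcoeff (sq_nonneg _)
    _ ≤ 9 * klFun t := by gcongr; exact sq_sqrt_sub_one_le_klFun ht

lemma log_two_mul_sub_one_le_klFun_of_six_le {t : ℝ} (ht6 : 6 ≤ t) :
    log 2 * (t - 1) ≤ klFun t := by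
  have hlog3 : 1 ≤ log 3 := by
    rw [le_log_iff_exp_le (by norm_num)]
    linarith [exp_one_lt_d9]
  have hlogt : log 2 + log 3 ≤ log t := by
    rw [← log_mul two_ne_zero three_ne_zero]
    exact log_le_log (by norm_num) (by linarith)
  rw [klFun_apply]
  nlinarith [log_pos one_lt_two]

lemma log_two_div_mul_sq_sub_one_le_klFun {m t : ℝ} (hm : 9 ≤ m) (ht : 0 ≤ t) (htm : t ≤ m) :
    log 2 / m * (t - 1) ^ 2 ≤ klFun t := by
  have hm0 : 0 < m := by linarith
  have hlog2 : 0 < log 2 := log_pos one_lt_two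
  rw [div_mul_eq_mul_div, div_le_iff₀ hm0]
  rcases le_or_gt t 6 with ht6 | ht6
  · nlinarith [log_two_mul_sq_sub_one_le_klFun_of_le_six ht ht6, klFun_nonneg ht]
  · have h := log_two_mul_sub_one_le_klFun_of_six_le ht6.le
    calc log 2 * (t - 1) ^ 2 = log 2 * (t - 1) * (t - 1) := by ring
      _ ≤ klFun t * m := mul_le_mul h (by linarith) (by linarith) (klFun_nonneg ht)

section Distribution

variable {α : Type*} [Fintype α] {μ : α → ℝ}

lemma sum_sq_card_mul_sub_one (hsum : ∑ a, μ a = 1) :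
    ∑ a, ((Fintype.card α : ℝ) * μ a - 1) ^ 2
      = Fintype.card α * (Fintype.card α * ∑ a, μ a ^ 2 - 1) := by
  simp only [sub_sq, sum_add_distrib, sum_sub_distrib, mul_pow, ← mul_sum, mul_one, hsum,
    sum_const, card_univ, nsmul_eq_mul]
  ring

lemma sum_klFun_card_mul (hsum : ∑ a, μ a = 1) :
    ∑ a, klFun (Fintype.card α * μ a)
      = Fintype.card α * (log (Fintype.card α) - ∑ a, negMulLog (μ a)) := by
  have hkl (x : ℝ) : klFun x = 1 - x - negMulLog x := by simp only [klFun_apply, negMulLog]; ring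
  simp only [hkl, negMulLog_mul, sum_sub_distrib, sum_add_distrib, ← mul_sum, ← sum_mul, hsum,
    sum_const, card_univ, nsmul_eq_mul]
  rw [negMulLog]
  ring

end Distribution

lemma mul_logb_inv (b x : ℝ) : x * logb b x⁻¹ = negMulLog x / log b := by
  simp only [logb, log_inv, negMulLog]
  ring

/-- For a distribution on a set of size `m > 16`, the squared ℓ₂-norm plus
the Shannon entropy (base 2) is at most `1/m + log₂ m`. -/
theorem l2_add_entropy_le {α : Type*} [Fintype α] (m : ℕ) (hm : 16 < m)
    (hcard : Fintype.card α = m) (μ : α → ℝ)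
    (hnn : ∀ a, 0 ≤ μ a) (hsum : ∑ a, μ a = 1) :
    (∑ a, (μ a) ^ 2) + ∑ a, μ a * Real.logb 2 (μ a)⁻¹
      ≤ 1 / (m : ℝ) + Real.logb 2 m := by
  have hm9 : (9 : ℝ) ≤ m := by exact_mod_cast (by omega : 9 ≤ m)
  have hlog2 : 0 < log 2 := log_pos one_lt_two
  have hμ_le_one (a : α) : μ a ≤ 1 := hsum ▸ single_le_sum (fun b _ => hnn b) (mem_univ a)
  have key : log 2 * (m * ∑ a, μ a ^ 2 - 1) ≤ m * (log m - ∑ a, negMulLog (μ a)) := by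
    have h := sum_le_sum fun a (_ : a ∈ univ) => log_two_div_mul_sq_sub_one_le_klFun hm9
      (mul_nonneg (by positivity) (hnn a)) (mul_le_of_le_one_right (by positivity) (hμ_le_one a))
    have hsq := sum_sq_card_mul_sub_one hsum
    have hkl := sum_klFun_card_mul hsum
    rw [hcard] at hsq hkl
    rwa [← mul_sum, hsq, hkl, ← mul_assoc, div_mul_cancel₀ _ (by positivity)] at h
  simp only [mul_logb_inv, ← sum_div]
  rw [logb, ← sub_nonneg]
  have hdiff : 1 / (m : ℝ) + log m / log 2 - (∑ a, μ a ^ 2 + (∑ a, negMulLog (μ a)) / log 2)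
      = (m * (log m - ∑ a, negMulLog (μ a)) - log 2 * (m * ∑ a, μ a ^ 2 - 1)) / (m * log 2) := by
    field_simp
    ring
  rw [hdiff]
  exact div_nonneg (by linarith) (by positivity)
end

section
/- For any random variable A with finite support of size m > 16, its Shannon entropy satisfies H(A) ≥ log m − (log e)·m·‖A‖_2^2 + log e (logarithms in base 2). -/
open Finset

/-- For a distribution on a set of size `m > 16`, the Shannon entropy (base 2)
is at least `log₂ m - (log₂ e) · m · ‖μ‖₂² + log₂ e`. -/
theorem entropy_ge_of_l2 {α : Type*} [Fintype α] (m : ℕ) (hm : 16 < m)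
    (hcard : Fintype.card α = m) (μ : α → ℝ)
    (hnn : ∀ a, 0 ≤ μ a) (hsum : ∑ a, μ a = 1) :
    Real.logb 2 m - Real.logb 2 (Real.exp 1) * m * (∑ a, (μ a) ^ 2)
        + Real.logb 2 (Real.exp 1)
      ≤ ∑ a, μ a * Real.logb 2 (μ a)⁻¹ := by
  have h2 : (0:ℝ) < Real.log 2 := Real.log_pos (by norm_num)
  have hm0 : (0:ℝ) < m := by positivity
  have key : ∀ a, μ a * Real.logb 2 (m:ℝ)
      + Real.logb 2 (Real.exp 1) * (μ a - m * (μ a)^2)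
      ≤ μ a * Real.logb 2 (μ a)⁻¹ := by
    intro a
    rcases eq_or_lt_of_le (hnn a) with h | h
    · simp [← h]
    · have hlog : Real.log ((m:ℝ) * μ a) ≤ (m:ℝ) * μ a - 1 :=
        Real.log_le_sub_one_of_pos (by positivity)
      have hmul : Real.log ((m:ℝ) * μ a) = Real.log m + Real.log (μ a) :=
        Real.log_mul (ne_of_gt hm0) (ne_of_gt h)
      have hkey : μ a - (m:ℝ) * (μ a)^2 ≤ μ a * (Real.log (μ a)⁻¹ - Real.log m) := by
        rw [Real.log_inv]
        nlinarith [hlog, hmul, h]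
      simp only [Real.logb, Real.log_exp]
      have h' : (μ a * Real.log (m:ℝ) + (μ a - (m:ℝ) * μ a ^ 2)) / Real.log 2
          ≤ μ a * Real.log (μ a)⁻¹ / Real.log 2 :=
        div_le_div_of_nonneg_right (by nlinarith) h2.le
      calc μ a * (Real.log (m:ℝ) / Real.log 2) + 1 / Real.log 2 * (μ a - (m:ℝ) * μ a ^ 2)
          = (μ a * Real.log (m:ℝ) + (μ a - (m:ℝ) * μ a ^ 2)) / Real.log 2 := by ring
        _ ≤ μ a * Real.log (μ a)⁻¹ / Real.log 2 := h'
        _ = μ a * (Real.log (μ a)⁻¹ / Real.log 2) := by ring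
  have hsumle := Finset.sum_le_sum (s := Finset.univ) (fun a _ => key a)
  have hL : ∑ a, (μ a * Real.logb 2 (m:ℝ)
      + Real.logb 2 (Real.exp 1) * (μ a - m * (μ a)^2))
      = Real.logb 2 m - Real.logb 2 (Real.exp 1) * m * (∑ a, (μ a) ^ 2)
        + Real.logb 2 (Real.exp 1) := by
    rw [Finset.sum_add_distrib, ← Finset.sum_mul, hsum, ← Finset.mul_sum]
    rw [Finset.sum_sub_distrib, hsum, ← Finset.mul_sum]
    ring
  linarith [hsumle, hL.ge, hL.le]
end

section
/- Let M be any random permutation of [m] with H(M) ≥ log(m!) − m/8. Then m·log m − ∑_{j=1}^m H(M(j)) ≤ 4·√((log(m!) − H(M))·m) + 3. -/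
open Finset

/-- Shannon entropy (base 2) of a finitely supported distribution. -/
noncomputable def ent {α : Type*} [Fintype α] (μ : α → ℝ) : ℝ :=
  ∑ a, μ a * Real.logb 2 (μ a)⁻¹

noncomputable def entL {α : Type*} [Fintype α] (μ : α → ℝ) : ℝ :=
  ∑ a, μ a * Real.log (μ a)⁻¹

lemma gibbs {α : Type*} [Fintype α] (p q : α → ℝ) (hp : ∀ a, 0 ≤ p a)
    (hq : ∀ a, 0 ≤ q a) (hpq : ∀ a, p a ≠ 0 → 0 < q a)
    (hs : ∑ a, q a ≤ ∑ a, p a) :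
    entL p ≤ ∑ a, p a * Real.log (q a)⁻¹ := by
  have key : ∀ a, p a * Real.log (p a)⁻¹ - p a * Real.log (q a)⁻¹ ≤ q a - p a := by
    intro a
    rcases eq_or_ne (p a) 0 with h | h
    · simp [h, hq a]
    · have hp' : 0 < p a := lt_of_le_of_ne (hp a) (Ne.symm h)
      have hq' : 0 < q a := hpq a h
      have h1 : Real.log (q a / p a) ≤ q a / p a - 1 :=
        Real.log_le_sub_one_of_pos (by positivity)
      rw [Real.log_div (ne_of_gt hq') (ne_of_gt hp')] at h1
      have h2 : p a * (Real.log (q a) - Real.log (p a)) ≤ p a * (q a / p a - 1) :=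
        mul_le_mul_of_nonneg_left h1 (hp a)
      have h3 : p a * (q a / p a - 1) = q a - p a := by field_simp
      have h4 : p a * Real.log (p a)⁻¹ - p a * Real.log (q a)⁻¹
          = p a * (Real.log (q a) - Real.log (p a)) := by
        rw [Real.log_inv, Real.log_inv]; ring
      linarith
  have h6 : ∑ a, (p a * Real.log (p a)⁻¹ - p a * Real.log (q a)⁻¹)
      ≤ ∑ a, (q a - p a) := Finset.sum_le_sum (fun a _ => key a)
  simp only [Finset.sum_sub_distrib] at h6
  rw [entL]
  linarith

noncomputable def marg (m : ℕ) (μ : Equiv.Perm (Fin m) → ℝ) (j : Fin m) :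
    Fin m → ℝ :=
  fun v : Fin m => ∑ σ, if σ j = v then μ σ else 0

lemma marg_apply (m : ℕ) (μ : Equiv.Perm (Fin m) → ℝ) (j v : Fin m) :
    marg m μ j v = ∑ σ, if σ j = v then μ σ else 0 := rfl

section marg
variable {m : ℕ} {μ : Equiv.Perm (Fin m) → ℝ}

lemma marg_nonneg (hnn : ∀ σ, 0 ≤ μ σ) (j v : Fin m) : 0 ≤ marg m μ j v := by
  apply Finset.sum_nonneg
  intro σ _
  split <;> simp [hnn σ]

lemma marg_sum (hsum : ∑ σ, μ σ = 1) (j : Fin m) : ∑ v, marg m μ j v = 1 := by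
  simp only [marg]
  rw [Finset.sum_comm]
  rw [← hsum]
  apply Finset.sum_congr rfl
  intro σ _
  simp

lemma le_marg (hnn : ∀ σ, 0 ≤ μ σ) (j : Fin m) (σ : Equiv.Perm (Fin m)) :
    μ σ ≤ marg m μ j (σ j) := by
  have := Finset.single_le_sum (f := fun σ' : Equiv.Perm (Fin m) =>
      if σ' j = σ j then μ σ' else 0) (fun σ' _ => by split <;> simp [hnn σ'])
      (Finset.mem_univ σ)
  simpa [marg] using this

lemma sum_mul_marg (j : Fin m) (f : Fin m → ℝ) :
    ∑ σ, μ σ * f (σ j) = ∑ v, marg m μ j v * f v := by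
  simp only [marg, Finset.sum_mul]
  rw [Finset.sum_comm]
  apply Finset.sum_congr rfl
  intro σ _
  rw [Finset.sum_congr rfl (fun v _ => ite_mul (σ j = v) (μ σ) 0 (f v))]
  simp
end marg
lemma fiber_card (m : ℕ) (S : Finset (Fin m)) (y : Fin m → Fin m) :
    (Finset.univ.filter
        (fun σ : Equiv.Perm (Fin m) => ∀ j ∈ S, σ j = y j)).card
      ≤ (m - S.card).factorial := by
  set F := Finset.univ.filter
      (fun σ : Equiv.Perm (Fin m) => ∀ j ∈ S, σ j = y j) with hF
  rcases F.eq_empty_or_nonempty with h | ⟨σ₀, hσ₀⟩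
  · simp [h, Nat.factorial_pos]
  · have hσ₀' : ∀ j ∈ S, σ₀ j = y j := (Finset.mem_filter.1 hσ₀).2
    set T : Finset (Fin m) := S.image y with hT
    have hTcard : T.card = S.card := by
      rw [hT]
      rw [show Finset.image y S = Finset.image (fun j => σ₀ j) S from
        Finset.image_congr (fun j hj => (hσ₀' j hj).symm)]
      exact Finset.card_image_of_injective _ σ₀.injective
    -- injection from F into embeddings Sᶜ ↪ Tᶜ
    have hmem : ∀ (σ : Equiv.Perm (Fin m)), σ ∈ F → ∀ x : Fin m, x ∉ S → σ x ∉ T := by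
      intro σ hσ x hx hxT
      obtain ⟨j, hj, hjy⟩ := Finset.mem_image.1 hxT
      have : σ j = σ x := by rw [(Finset.mem_filter.1 hσ).2 j hj, hjy]
      exact hx (σ.injective this ▸ hj)
    classical
    have hcard : Fintype.card ↥F ≤ Fintype.card ((↥(Sᶜ : Finset (Fin m))) ↪ (↥(Tᶜ : Finset (Fin m)))) := by
      apply Fintype.card_le_of_injective
        (fun σ : ↥F => ⟨fun x => ⟨σ.1 x.1, by
            simp only [Finset.mem_compl]
            exact hmem σ.1 σ.2 x.1 (Finset.mem_compl.1 x.2)⟩,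
          fun a b hab => by
            apply Subtype.ext
            exact σ.1.injective (congrArg Subtype.val hab)⟩)
      intro σ₁ σ₂ h12
      apply Subtype.ext
      apply Equiv.ext
      intro x
      by_cases hx : x ∈ S
      · rw [(Finset.mem_filter.1 σ₁.2).2 x hx, (Finset.mem_filter.1 σ₂.2).2 x hx]
      · have := congrArg (fun f => (f.1 ⟨x, Finset.mem_compl.2 hx⟩).1) h12
        exact this
    rw [Fintype.card_coe] at hcard
    calc F.card ≤ _ := hcard
      _ = (m - S.card).factorial := by
        rw [Fintype.card_embedding_eq, Fintype.card_coe, Fintype.card_coe,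
          Finset.card_compl, Finset.card_compl, Fintype.card_fin, hTcard,
          Nat.descFactorial_self]
lemma sum_prod_marg (m : ℕ) (μ : Equiv.Perm (Fin m) → ℝ) (hnn : ∀ σ, 0 ≤ μ σ)
    (hsum : ∑ σ, μ σ = 1) (S : Finset (Fin m)) :
    ∑ σ : Equiv.Perm (Fin m), ∏ j ∈ S, marg m μ j (σ j)
      ≤ ((m - S.card).factorial : ℝ) := by
  classical
  have hattach : ∀ σ : Equiv.Perm (Fin m),
      ∏ j ∈ S, marg m μ j (σ j) = ∏ j : ↥S, marg m μ j.1 (σ j.1) :=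
    fun σ => (Finset.prod_coe_sort S (fun j => marg m μ j (σ j))).symm
  simp only [hattach]
  rw [← Finset.sum_fiberwise Finset.univ (fun σ : Equiv.Perm (Fin m) => fun j : ↥S => σ j.1)
      (fun σ => ∏ j : ↥S, marg m μ j.1 (σ j.1))]
  have hinner : ∀ y : ↥S → Fin m,
      ∑ σ ∈ Finset.univ.filter
          (fun σ : Equiv.Perm (Fin m) => (fun j : ↥S => σ j.1) = y),
        ∏ j : ↥S, marg m μ j.1 (σ j.1)
      ≤ ((m - S.card).factorial : ℝ) * ∏ j : ↥S, marg m μ j.1 (y j) := by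
    intro y
    have h1 : ∑ σ ∈ Finset.univ.filter
          (fun σ : Equiv.Perm (Fin m) => (fun j : ↥S => σ j.1) = y),
        ∏ j : ↥S, marg m μ j.1 (σ j.1)
        = (Finset.univ.filter
          (fun σ : Equiv.Perm (Fin m) => (fun j : ↥S => σ j.1) = y)).card
          * ∏ j : ↥S, marg m μ j.1 (y j) := by
      rw [Finset.sum_congr rfl (fun σ hσ => ?_), Finset.sum_const, nsmul_eq_mul]
      have := (Finset.mem_filter.1 hσ).2
      exact Finset.prod_congr rfl (fun j _ => by rw [congrFun this j])
    rw [h1]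
    have hcard : (Finset.univ.filter
        (fun σ : Equiv.Perm (Fin m) => (fun j : ↥S => σ j.1) = y)).card
        ≤ (m - S.card).factorial := by
      refine le_trans (Finset.card_le_card ?_)
        (fiber_card m S (fun j => if h : j ∈ S then y ⟨j, h⟩ else j))
      intro σ hσ
      rw [Finset.mem_filter] at hσ ⊢
      refine ⟨Finset.mem_univ _, fun j hj => ?_⟩
      rw [dif_pos hj, ← congrFun hσ.2 ⟨j, hj⟩]
    have hprod : 0 ≤ ∏ j : ↥S, marg m μ j.1 (y j) :=
      Finset.prod_nonneg (fun j _ => marg_nonneg hnn _ _)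
    exact mul_le_mul_of_nonneg_right (by exact_mod_cast hcard) hprod
  calc ∑ y : ↥S → Fin m, ∑ σ ∈ Finset.univ.filter
          (fun σ : Equiv.Perm (Fin m) => (fun j : ↥S => σ j.1) = y),
        ∏ j : ↥S, marg m μ j.1 (σ j.1)
      ≤ ∑ y : ↥S → Fin m,
          ((m - S.card).factorial : ℝ) * ∏ j : ↥S, marg m μ j.1 (y j) :=
        Finset.sum_le_sum (fun y _ => hinner y)
    _ = ((m - S.card).factorial : ℝ) *
          ∑ y : ↥S → Fin m, ∏ j : ↥S, marg m μ j.1 (y j) := by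
        rw [Finset.mul_sum]
    _ = ((m - S.card).factorial : ℝ) := by
        rw [show ∑ y : ↥S → Fin m, ∏ j : ↥S, marg m μ j.1 (y j)
            = ∏ j : ↥S, ∑ v, marg m μ j.1 v from ?_]
        · simp [marg_sum hsum]
        · rw [Finset.prod_univ_sum (fun _ => (Finset.univ : Finset (Fin m)))]
          rw [Fintype.piFinset_univ]
lemma star (m : ℕ) (μ : Equiv.Perm (Fin m) → ℝ) (hnn : ∀ σ, 0 ≤ μ σ)
    (hsum : ∑ σ, μ σ = 1) (S : Finset (Fin m)) :
    entL μ ≤ ∑ j ∈ S, entL (marg m μ j)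
      + Real.log ((m - S.card).factorial) := by
  classical
  set q : Equiv.Perm (Fin m) → ℝ :=
    fun σ => (∏ j ∈ S, marg m μ j (σ j)) / ((m - S.card).factorial : ℝ) with hq
  have hfacpos : (0:ℝ) < ((m - S.card).factorial : ℝ) := by
    exact_mod_cast Nat.factorial_pos _
  have hmargpos : ∀ σ : Equiv.Perm (Fin m), μ σ ≠ 0 →
      ∀ j ∈ S, 0 < marg m μ j (σ j) := by
    intro σ h0 j _
    exact lt_of_lt_of_le (lt_of_le_of_ne (hnn σ) (Ne.symm h0)) (le_marg hnn j σ)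
  have hq0 : ∀ σ, 0 ≤ q σ := fun σ => div_nonneg
    (Finset.prod_nonneg (fun j _ => marg_nonneg hnn _ _)) (le_of_lt hfacpos)
  have hqpos : ∀ σ, μ σ ≠ 0 → 0 < q σ := by
    intro σ h0
    exact div_pos (Finset.prod_pos (hmargpos σ h0)) hfacpos
  have hqs : ∑ σ, q σ ≤ ∑ σ, μ σ := by
    rw [hsum, hq]
    rw [← Finset.sum_div]
    rw [div_le_one hfacpos]
    exact sum_prod_marg m μ hnn hsum S
  refine (gibbs μ q hnn hq0 hqpos hqs).trans (le_of_eq ?_)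
  have hterm : ∀ σ : Equiv.Perm (Fin m), μ σ * Real.log (q σ)⁻¹
      = μ σ * Real.log ((m - S.card).factorial)
        + ∑ j ∈ S, μ σ * Real.log (marg m μ j (σ j))⁻¹ := by
    intro σ
    rcases eq_or_ne (μ σ) 0 with h0 | h0
    · simp [h0]
    · have hpp : 0 < ∏ j ∈ S, marg m μ j (σ j) := Finset.prod_pos (hmargpos σ h0)
      have hlog : Real.log (q σ)⁻¹
          = Real.log ((m - S.card).factorial)
            + ∑ j ∈ S, Real.log (marg m μ j (σ j))⁻¹ := by
        rw [hq, Real.log_inv, Real.log_div (ne_of_gt hpp) (ne_of_gt hfacpos),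
          Real.log_prod (fun j hj => ne_of_gt (hmargpos σ h0 j hj))]
        rw [Finset.sum_congr rfl (fun j _ => Real.log_inv (marg m μ j (σ j))),
          Finset.sum_neg_distrib]
        ring
      rw [hlog, mul_add, Finset.mul_sum]
  rw [Finset.sum_congr rfl (fun σ _ => hterm σ), Finset.sum_add_distrib,
    ← Finset.sum_mul, hsum, one_mul, Finset.sum_comm]
  rw [Finset.sum_congr rfl
    (fun j _ => sum_mul_marg j (fun v => Real.log (marg m μ j v)⁻¹))]
  rw [add_comm]
  rfl

lemma maxent (m : ℕ) (hm : 0 < m) (ν : Fin m → ℝ) (hnn : ∀ v, 0 ≤ ν v)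
    (hsum : ∑ v, ν v = 1) : entL ν ≤ Real.log m := by
  have hmpos : (0:ℝ) < m := by exact_mod_cast hm
  have := gibbs ν (fun _ => (m:ℝ)⁻¹) hnn (fun _ => by positivity)
    (fun _ _ => by positivity) (by simp [hsum, Finset.card_univ, mul_inv_cancel₀ (ne_of_gt hmpos)])
  refine this.trans (le_of_eq ?_)
  simp [← Finset.sum_mul, hsum]
lemma topk (m k : ℕ) (hk : 1 ≤ k) (hkm : k ≤ m) (δ : Fin m → ℝ)
    (hδ : ∀ j, 0 ≤ δ j) (C : ℝ)
    (key : ∀ S : Finset (Fin m), S.card = k → ∑ j ∈ S, δ j ≤ C) :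
    ∑ j, δ j ≤ ((m : ℝ) / k) * C := by
  classical
  obtain ⟨S, hSmem, hSmax⟩ := Finset.exists_max_image
    ((Finset.univ : Finset (Fin m)).powersetCard k) (fun S => ∑ j ∈ S, δ j)
    (Finset.powersetCard_nonempty.2 (by simpa using hkm))
  have hS : S.card = k := (Finset.mem_powersetCard.1 hSmem).2
  have hSne : S.Nonempty := Finset.card_pos.1 (by omega)
  obtain ⟨i₀, hi₀S, hi₀min⟩ := Finset.exists_min_image S δ hSne
  have hout : ∀ j, j ∉ S → δ j ≤ δ i₀ := by
    intro j hj
    have hj' : j ∉ S.erase i₀ := fun h => hj (Finset.mem_of_mem_erase h)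
    have hcard : (insert j (S.erase i₀)).card = k := by
      rw [Finset.card_insert_of_notMem hj', Finset.card_erase_of_mem hi₀S]
      omega
    have hmem : insert j (S.erase i₀) ∈
        (Finset.univ : Finset (Fin m)).powersetCard k :=
      Finset.mem_powersetCard.2 ⟨Finset.subset_univ _, hcard⟩
    have h1 := hSmax _ hmem
    rw [Finset.sum_insert hj'] at h1
    have h2 : ∑ x ∈ S.erase i₀, δ x + δ i₀ = ∑ x ∈ S, δ x :=
      Finset.sum_erase_add S δ hi₀S
    linarith
  have hkpos : (0:ℝ) < k := by exact_mod_cast hk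
  have hC0 : 0 ≤ C :=
    le_trans (Finset.sum_nonneg (fun j _ => hδ j)) (key S hS)
  have hmin : (k:ℝ) * δ i₀ ≤ C := by
    have := Finset.card_nsmul_le_sum S δ (δ i₀) (fun x hx => hi₀min x hx)
    rw [hS, nsmul_eq_mul] at this
    exact this.trans (key S hS)
  have hmin' : δ i₀ ≤ C / k := (le_div_iff₀ hkpos).2 (by linarith [hmin])
  have hsplit : ∑ j, δ j = ∑ j ∈ S, δ j + ∑ j ∈ Finset.univ \ S, δ j := by
    rw [add_comm, Finset.sum_sdiff (Finset.subset_univ S)]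
  have hrest : ∑ j ∈ Finset.univ \ S, δ j ≤ ((m:ℝ) - k) * δ i₀ := by
    have h1 := Finset.sum_le_card_nsmul (Finset.univ \ S) δ (δ i₀)
      (fun x hx => hout x (Finset.mem_sdiff.1 hx).2)
    rw [Finset.card_sdiff_of_subset (Finset.subset_univ S), Finset.card_univ,
      Fintype.card_fin, hS, nsmul_eq_mul] at h1
    have : ((m - k : ℕ) : ℝ) = (m:ℝ) - k := by
      push_cast [Nat.cast_sub hkm]; ring
    rw [this] at h1
    exact h1
  have hδi0 : 0 ≤ δ i₀ := hδ i₀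
  have hmk : (0:ℝ) ≤ (m:ℝ) - k := by
    have : (k:ℝ) ≤ m := by exact_mod_cast hkm
    linarith
  calc ∑ j, δ j ≤ C + ((m:ℝ) - k) * δ i₀ := by
        rw [hsplit]; exact add_le_add (key S hS) hrest
    _ ≤ C + ((m:ℝ) - k) * (C / k) := by
        exact add_le_add_right (mul_le_mul_of_nonneg_left hmin' hmk) C
    _ = ((m : ℝ) / k) * C := by field_simp; ring
lemma ent_eq_entL {α : Type*} [Fintype α] (μ : α → ℝ) :
    ent μ = entL μ / Real.log 2 := by
  rw [ent, entL, Finset.sum_div]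
  exact Finset.sum_congr rfl (fun a _ => by rw [Real.logb, mul_div_assoc])

set_option maxHeartbeats 2000000 in
/-- If a random permutation `M` of `[m]` has entropy at least `log₂(m!) - m/8`,
then `m log₂ m - ∑ⱼ H(M(j)) ≤ 4 √((log₂(m!) - H(M))·m) + 3`. -/
theorem high_entropy_perm_coordinates (m : ℕ) (hm : 0 < m)
    (μ : Equiv.Perm (Fin m) → ℝ)
    (hnn : ∀ σ, 0 ≤ μ σ) (hsum : ∑ σ, μ σ = 1)
    (hH : Real.logb 2 (Nat.factorial m) - m / 8 ≤ ent μ) :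
    (m : ℝ) * Real.logb 2 m
        - ∑ j : Fin m, ent (fun v : Fin m => ∑ σ, if σ j = v then μ σ else 0)
      ≤ 4 * Real.sqrt ((Real.logb 2 (Nat.factorial m) - ent μ) * m) + 3 := by
  classical
  set L2 := Real.log 2 with hL2def
  have hL2 : 0.6931471803 < L2 := Real.log_two_gt_d9
  have hL2pos : (0:ℝ) < L2 := by norm_num at hL2 ⊢; linarith
  have hmR : (0:ℝ) < m := by exact_mod_cast hm
  set D := Real.log (Nat.factorial m) - entL μ with hDdef
  have hD0 : 0 ≤ D := by
    have := star m μ hnn hsum ∅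
    simp only [Finset.sum_empty, Finset.card_empty, Nat.sub_zero, zero_add] at this
    rw [hDdef]; linarith
  set d := D / L2 with hddef
  have hd0 : 0 ≤ d := div_nonneg hD0 (le_of_lt hL2pos)
  have hd : Real.logb 2 (Nat.factorial m) - ent μ = d := by
    rw [ent_eq_entL, Real.logb, hddef, hDdef, sub_div]
  have hd8 : d ≤ (m:ℝ) / 8 := by rw [← hd]; linarith
  set δ : Fin m → ℝ := fun j => Real.log m - entL (marg m μ j) with hδdef
  have hδ0 : ∀ j, 0 ≤ δ j := by
    intro j
    have := maxent m hm (marg m μ j) (marg_nonneg hnn j) (marg_sum hsum j)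
    simp only [hδdef]; linarith
  -- rewrite the goal
  have hgoal : (m : ℝ) * Real.logb 2 m
      - ∑ j : Fin m, ent (fun v : Fin m => ∑ σ, if σ j = v then μ σ else 0)
      = (∑ j, δ j) / L2 := by
    have h1 : ∀ j : Fin m,
        ent (fun v : Fin m => ∑ σ, if σ j = v then μ σ else 0)
          = entL (marg m μ j) / L2 := fun j => ent_eq_entL (marg m μ j)
    simp only [h1, hδdef]
    rw [Finset.sum_sub_distrib, Finset.sum_const, Finset.card_univ,
      Fintype.card_fin, sub_div, Finset.sum_div, Real.logb, nsmul_eq_mul,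
      mul_div_assoc]
  rw [hgoal, hd]
  -- the key inequality for sets of size k
  have hkey : ∀ (k:ℕ), 1 ≤ k → k ≤ m → ∀ S : Finset (Fin m), S.card = k →
      ∑ j ∈ S, δ j ≤ k * (Real.log m - Real.log ((m:ℝ) - k + 1)) + D := by
    intro k hk1 hkm S hSk
    have hstar := star m μ hnn hsum S
    rw [hSk] at hstar
    have hsplit : ∑ j ∈ S, δ j
        = k * Real.log m - ∑ j ∈ S, entL (marg m μ j) := by
      simp only [hδdef]
      rw [Finset.sum_sub_distrib, Finset.sum_const, hSk, nsmul_eq_mul]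
    have hdv : ((m-k).factorial * m.descFactorial k : ℕ) = m.factorial :=
      Nat.factorial_mul_descFactorial hkm
    have hpow : ((m+1-k)^k : ℕ) ≤ m.descFactorial k :=
      Nat.pow_sub_le_descFactorial m k
    have hfa : Real.log ((m-k).factorial) + k * Real.log ((m:ℝ) - k + 1)
        ≤ Real.log (Nat.factorial m) := by
      have hfac1 : (0:ℝ) < ((m-k).factorial : ℝ) := by
        exact_mod_cast Nat.factorial_pos _
      have hcast : (((m+1-k)^k : ℕ) : ℝ) = ((m:ℝ) - k + 1)^k := by
        push_cast [Nat.cast_sub (by omega : k ≤ m + 1)]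
        ring_nf
      have hpow' : (0:ℝ) < (((m+1-k)^k : ℕ) : ℝ) := by
        have h0 : 0 < (m+1-k)^k := Nat.pow_pos (by omega)
        exact_mod_cast h0
      have h3n : (m-k).factorial * (m+1-k)^k ≤ m.factorial := by
        rw [← hdv]
        exact Nat.mul_le_mul_left _ hpow
      have h3 : ((m-k).factorial : ℝ) * (((m+1-k)^k : ℕ) : ℝ)
          ≤ ((m.factorial : ℕ) : ℝ) := by
        rw [← Nat.cast_mul]
        exact_mod_cast h3n
      have h4 := Real.log_le_log (by positivity) h3
      rw [Real.log_mul (ne_of_gt hfac1) (ne_of_gt hpow'), hcast,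
        Real.log_pow] at h4
      push_cast at h4 ⊢
      linarith
    rw [hsplit]
    rw [hDdef]
    linarith
  -- choose between the two regimes
  set t := Real.sqrt (d * m) with htdef
  have ht0 : 0 ≤ t := Real.sqrt_nonneg _
  have ht2 : t^2 = d * m := Real.sq_sqrt (by positivity)
  by_cases hcase : d * m ≤ 16
  · -- small case : k = 1
    have hmaster := topk m 1 le_rfl hm δ hδ0 _ (hkey 1 le_rfl hm)
    have hsimp : ((m:ℝ)/((1:ℕ):ℝ)) * (((1:ℕ):ℝ) * (Real.log m - Real.log ((m:ℝ) - ((1:ℕ):ℝ) + 1)) + D)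
        = m * D := by
      push_cast
      norm_num
    rw [hsimp] at hmaster
    have h5 : (∑ j, δ j) / L2 ≤ (m:ℝ) * d := by
      rw [hddef, ← mul_div_assoc]
      exact div_le_div_of_nonneg_right hmaster hL2pos.le
    have ht4 : t ≤ 4 := by nlinarith [ht2, sq_nonneg (t - 4)]
    nlinarith [mul_nonneg ht0 (sub_nonneg.2 ht4), ht2]
  · -- large case
    push_neg at hcase
    have ht4 : 4 < t := by nlinarith
    set k := ⌈t⌉₊ with hkdef
    have hk1 : 1 ≤ k := Nat.one_le_ceil_iff.2 (by linarith)
    have htk : t ≤ k := Nat.le_ceil t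
    have hklt : (k:ℝ) < t + 1 := Nat.ceil_lt_add_one ht0
    have htm : t^2 ≤ (m:ℝ)^2 / 8 := by
      rw [ht2]
      nlinarith
    have h51 : t ≤ 2*(m:ℝ)/5 := by
      nlinarith [sq_nonneg (t - 2*(m:ℝ)/5), htm, mul_pos hmR hmR, hmR]
    have hm10 : (10:ℝ) ≤ (m:ℝ) := by nlinarith
    have hkhalf : (k:ℝ) ≤ (m:ℝ)/2 := by linarith
    have hkm : k ≤ m := by
      have : (k:ℝ) ≤ (m:ℝ) := by linarith
      exact_mod_cast this
    have hkpos : (0:ℝ) < k := by exact_mod_cast hk1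
    have hdenom : (0:ℝ) < (m:ℝ) - k + 1 := by linarith
    have hdenom2 : (m:ℝ)/2 ≤ (m:ℝ) - k + 1 := by linarith
    have hmaster := topk m k hk1 hkm δ hδ0 _ (hkey k hk1 hkm)
    have hexp : ((m:ℝ)/k) * ((k:ℝ) * (Real.log m - Real.log ((m:ℝ) - k + 1)) + D)
        = (m:ℝ) * (Real.log m - Real.log ((m:ℝ) - k + 1)) + ((m:ℝ)/k) * D := by
      field_simp
    rw [hexp] at hmaster
    have hlog : Real.log m - Real.log ((m:ℝ) - k + 1)
        ≤ ((k:ℝ) - 1) / ((m:ℝ) - k + 1) := by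
      rw [← Real.log_div (ne_of_gt hmR) (ne_of_gt hdenom)]
      have := Real.log_le_sub_one_of_pos
        (show (0:ℝ) < (m:ℝ) / ((m:ℝ) - k + 1) by positivity)
      have heq : (m:ℝ) / ((m:ℝ) - k + 1) - 1 = ((k:ℝ) - 1) / ((m:ℝ) - k + 1) := by
        field_simp
        ring
      linarith [heq ▸ this]
    have hterm1 : (m:ℝ) * (Real.log m - Real.log ((m:ℝ) - k + 1)) ≤ 2 * t := by
      have h6 : ((k:ℝ) - 1) / ((m:ℝ) - k + 1) ≤ t / ((m:ℝ)/2) := by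
        apply div_le_div₀ (by positivity) (by linarith) (by positivity) hdenom2
      have h7 : t / ((m:ℝ)/2) = 2 * t / m := by field_simp
      have h8 : (m:ℝ) * (2 * t / m) = 2 * t := by field_simp
      calc (m:ℝ) * (Real.log m - Real.log ((m:ℝ) - k + 1))
          ≤ (m:ℝ) * (((k:ℝ) - 1) / ((m:ℝ) - k + 1)) :=
            mul_le_mul_of_nonneg_left hlog (le_of_lt hmR)
        _ ≤ (m:ℝ) * (2 * t / m) := by
            apply mul_le_mul_of_nonneg_left _ (le_of_lt hmR)
            rw [← h7]; exact h6
        _ = 2 * t := h8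
    have hterm2 : ((m:ℝ)/k) * D ≤ L2 * t := by
      have htpos : (0:ℝ) < t := by linarith
      have h9 : (m:ℝ)/k ≤ (m:ℝ)/t := by
        apply div_le_div_of_nonneg_left (le_of_lt hmR) htpos htk
      have hDd : D = d * L2 := by rw [hddef]; field_simp
      have hdm' : d * (m:ℝ) = t * t := by rw [← ht2]; ring
      have h10 : ((m:ℝ)/t) * D = L2 * t := by
        rw [hDd]
        calc ((m:ℝ)/t) * (d * L2) = L2 * ((d * (m:ℝ))/t) := by ring
          _ = L2 * ((t*t)/t) := by rw [hdm']
          _ = L2 * t := by rw [mul_div_assoc, div_self (ne_of_gt htpos), mul_one]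
      calc ((m:ℝ)/k) * D ≤ ((m:ℝ)/t) * D :=
            mul_le_mul_of_nonneg_right h9 hD0
        _ = L2 * t := h10
    have hfinal : ∑ j, δ j ≤ 2 * t + L2 * t := by linarith
    have : (∑ j, δ j) / L2 ≤ (2 * t + L2 * t) / L2 :=
      div_le_div_of_nonneg_right hfinal hL2pos.le
    have hbound : (2 * t + L2 * t) / L2 ≤ 4 * t := by
      rw [div_le_iff₀ hL2pos]
      nlinarith
    linarith
end

section
/- Let M be a random variable uniform over a finite set of size t, and let A be a random variable with support of size at most ℓ and distribution α. Let β : supp(A) → [ε, 1] be an arbitrary function. Then (∑_A β(A)^{-1}·α(A)^2·H(M | A = A)) / (∑_A β(A)^{-1}·α(A)^2) ≥ log t − log(ℓ/ε). -/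
open Finset

/-- Weighted sum of conditional entropies: if `M` is uniform over `[t]`,
`A` has support of size at most `ℓ` and distribution `α`, and
`β : supp(A) → [ε, 1]`, then the `β⁻¹α²`-weighted average of `H(M | A = a)`
is at least `log₂ t - log₂(ℓ/ε)`. -/
theorem weighted_sum_entropy (t ℓ : ℕ) (ht : 0 < t)
    (ε : ℝ) (hε : 0 < ε) (hε1 : ε ≤ 1)
    {ι : Type*} [Fintype ι] (hι : Fintype.card ι ≤ ℓ)
    (α : ι → ℝ) (hαnn : ∀ a, 0 ≤ α a) (hαsum : ∑ a, α a = 1)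
    (p : ι → Fin t → ℝ) (hpnn : ∀ a v, 0 ≤ p a v) (hpsum : ∀ a, ∑ v, p a v = 1)
    (hmarg : ∀ v, ∑ a, α a * p a v = 1 / (t : ℝ))
    (β : ι → ℝ) (hβlo : ∀ a, ε ≤ β a) (hβhi : ∀ a, β a ≤ 1) :
    (∑ a, (β a)⁻¹ * (α a) ^ 2 * ent (p a)) / (∑ a, (β a)⁻¹ * (α a) ^ 2)
      ≥ Real.logb 2 t - Real.logb 2 ((ℓ : ℝ) / ε) := by
    classical
  set w : ι → ℝ := fun a => (β a)⁻¹ * (α a) ^ 2 with hw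
  have hβpos : ∀ a, 0 < β a := fun a => lt_of_lt_of_le hε (hβlo a)
  have hwnn : ∀ a, 0 ≤ w a := fun a =>
    mul_nonneg (inv_nonneg.2 (hβpos a).le) (sq_nonneg _)
  have hwzero : ∀ a, α a = 0 → w a = 0 := by
    intro a h; simp [hw, h]
  -- cardinality
  have hcard : 0 < Fintype.card ι := by
    rcases Nat.eq_zero_or_pos (Fintype.card ι) with h | h
    · have : IsEmpty ι := Fintype.card_eq_zero_iff.mp h
      rw [Finset.univ_eq_empty, Finset.sum_empty] at hαsum
      norm_num at hαsum
    · exact h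
  have hℓ : 0 < ℓ := lt_of_lt_of_le hcard hι
  have hℓR : (0:ℝ) < (ℓ:ℝ) := by exact_mod_cast hℓ
  set W : ℝ := ∑ a, w a with hWdef
  have hWge : (ℓ:ℝ)⁻¹ ≤ W := by
    have h1 : (1:ℝ) ≤ (Fintype.card ι : ℝ) * ∑ a, (α a)^2 := by
      have := sq_sum_le_card_mul_sum_sq (s := (univ : Finset ι)) (f := α)
      simpa [hαsum] using this
    have h2 : ∑ a, (α a)^2 ≤ W := by
      apply Finset.sum_le_sum
      intro a _
      have h : (1:ℝ) ≤ (β a)⁻¹ := one_le_inv_iff₀.mpr ⟨hβpos a, hβhi a⟩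
      simpa [hw] using mul_le_mul_of_nonneg_right h (sq_nonneg (α a))
    have h3 : (1:ℝ) ≤ (ℓ:ℝ) * W := by
      calc (1:ℝ) ≤ (Fintype.card ι : ℝ) * ∑ a, (α a)^2 := h1
        _ ≤ (ℓ:ℝ) * ∑ a, (α a)^2 := by
            apply mul_le_mul_of_nonneg_right (by exact_mod_cast hι)
            positivity
        _ ≤ (ℓ:ℝ) * W := by nlinarith
    rw [inv_le_iff_one_le_mul₀ hℓR] -- maybe wrong name
    linarith [h3]
  have hWpos : (0:ℝ) < W := lt_of_lt_of_le (by positivity) hWge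
  set S : Finset ι := univ.filter (fun a => α a ≠ 0) with hS
  have hWS : ∑ a ∈ S, w a = W := by
    rw [hWdef]
    apply Finset.sum_subset (Finset.filter_subset _ _)
    intro x _ hx
    have : α x = 0 := by
      by_contra h
      exact hx (Finset.mem_filter.mpr ⟨Finset.mem_univ x, h⟩)
    exact hwzero x this
  have hSne : S.Nonempty := by
    by_contra h
    rw [Finset.not_nonempty_iff_eq_empty, Finset.filter_eq_empty_iff] at h
    push_neg at h
    have : ∑ a, α a = 0 := Finset.sum_eq_zero (fun a _ => h (Finset.mem_univ a))
    rw [hαsum] at this; norm_num at this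
  have hαpos : ∀ a ∈ S, 0 < α a := by
    intro a ha
    exact lt_of_le_of_ne (hαnn a) (Ne.symm (Finset.mem_filter.mp ha).2)
  -- Step A: pointwise entropy lower bound
  have key1 : ∀ a ∈ S, w a * Real.logb 2 ((t:ℝ) * α a) ≤ w a * ent (p a) := by
    intro a ha
    apply mul_le_mul_of_nonneg_left _ (hwnn a)
    have hta : (0:ℝ) < (t:ℝ) * α a := by
      have := hαpos a ha
      have htR : (0:ℝ) < (t:ℝ) := by exact_mod_cast ht
      positivity
    calc Real.logb 2 ((t:ℝ) * α a) = ∑ v, p a v * Real.logb 2 ((t:ℝ) * α a) := by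
          rw [← Finset.sum_mul, hpsum a, one_mul]
      _ ≤ ∑ v, p a v * Real.logb 2 (p a v)⁻¹ := by
          apply Finset.sum_le_sum
          intro v _
          rcases eq_or_lt_of_le (hpnn a v) with h | h
          · rw [← h]; simp
          · apply mul_le_mul_of_nonneg_left _ (hpnn a v)
            apply Real.logb_le_logb_of_le one_lt_two hta
            have hsingle : α a * p a v ≤ 1 / (t:ℝ) := by
              rw [← hmarg v]
              exact Finset.single_le_sum
                (fun i _ => mul_nonneg (hαnn i) (hpnn i v)) (Finset.mem_univ a)
            rw [le_inv_comm₀ hta h]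
            have hα0 : α a ≠ 0 := (hαpos a ha).ne'
            calc p a v = (α a)⁻¹ * (α a * p a v) := by
                  field_simp
              _ ≤ (α a)⁻¹ * (1 / (t:ℝ)) := by
                  apply mul_le_mul_of_nonneg_left hsingle
                  exact inv_nonneg.2 (hαnn a)
              _ = ((t:ℝ) * α a)⁻¹ := by
                  rw [mul_inv]
                  field_simp [mul_comm]
      _ = ent (p a) := rfl
  -- concavity of logb 2
  have hconc : ConcaveOn ℝ (Set.Ioi 0) (Real.logb 2) := by
    have heq : (Real.logb 2) = fun x => (Real.log 2)⁻¹ • Real.log x := by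
      funext x; simp [Real.logb, div_eq_inv_mul, smul_eq_mul]
    rw [heq]
    exact (strictConcaveOn_log_Ioi.concaveOn).smul (by positivity)
  set u : ι → ℝ := fun a => w a / W with hu
  have hu1 : ∑ a ∈ S, u a = 1 := by
    rw [hu, ← Finset.sum_div, hWS, div_self hWpos.ne']
  have hJ : ∑ a ∈ S, u a • Real.logb 2 (α a)⁻¹
      ≤ Real.logb 2 (∑ a ∈ S, u a • (α a)⁻¹) :=
    hconc.le_map_sum (fun a _ => div_nonneg (hwnn a) hWpos.le) hu1
      (fun a ha => Set.mem_Ioi.mpr (inv_pos.2 (hαpos a ha)))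
  have hinner_le : ∑ a ∈ S, u a • (α a)⁻¹ ≤ (ℓ:ℝ)/ε := by
    have h1 : ∑ a ∈ S, w a * (α a)⁻¹ ≤ ε⁻¹ := by
      calc ∑ a ∈ S, w a * (α a)⁻¹ = ∑ a ∈ S, (β a)⁻¹ * α a := by
            apply Finset.sum_congr rfl
            intro a ha
            have hα0 : α a ≠ 0 := (hαpos a ha).ne'
            show (β a)⁻¹ * α a ^ 2 * (α a)⁻¹ = (β a)⁻¹ * α a
            rw [sq, mul_assoc, mul_assoc, mul_inv_cancel₀ hα0, mul_one]
        _ ≤ ∑ a ∈ S, ε⁻¹ * α a := by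
            apply Finset.sum_le_sum
            intro a ha
            exact mul_le_mul_of_nonneg_right
              (inv_anti₀ hε (hβlo a)) (hαnn a)
        _ = ε⁻¹ * ∑ a ∈ S, α a := by rw [Finset.mul_sum]
        _ ≤ ε⁻¹ * 1 := by
            apply mul_le_mul_of_nonneg_left _ (inv_nonneg.2 hε.le)
            rw [← hαsum]
            exact Finset.sum_le_sum_of_subset_of_nonneg (Finset.filter_subset _ _)
              (fun a _ _ => hαnn a)
        _ = ε⁻¹ := mul_one _
    calc ∑ a ∈ S, u a • (α a)⁻¹ = (∑ a ∈ S, w a * (α a)⁻¹) / W := by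
          rw [Finset.sum_div]
          apply Finset.sum_congr rfl
          intro a ha
          rw [smul_eq_mul, hu]
          ring
      _ ≤ ε⁻¹ / W := div_le_div_of_nonneg_right h1 hWpos.le
      _ ≤ (ℓ:ℝ)/ε := by
          calc ε⁻¹ / W ≤ ε⁻¹ / (ℓ:ℝ)⁻¹ :=
                div_le_div_of_nonneg_left (inv_nonneg.2 hε.le) (inv_pos.2 hℓR) hWge
            _ = (ℓ:ℝ)/ε := by field_simp
  have hinner_pos : 0 < ∑ a ∈ S, u a • (α a)⁻¹ := by
    obtain ⟨a0, ha0⟩ := hSne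
    apply Finset.sum_pos' (fun a ha => smul_nonneg (div_nonneg (hwnn a) hWpos.le)
      (inv_nonneg.2 (hαnn a)))
    refine ⟨a0, ha0, ?_⟩
    have hw0 : 0 < w a0 := mul_pos (inv_pos.2 (hβpos a0)) (pow_pos (hαpos a0 ha0) 2)
    exact smul_pos (div_pos hw0 hWpos) (inv_pos.2 (hαpos a0 ha0))
  have hJ2 : ∑ a ∈ S, u a * Real.logb 2 (α a)⁻¹ ≤ Real.logb 2 ((ℓ:ℝ)/ε) := by
    calc ∑ a ∈ S, u a * Real.logb 2 (α a)⁻¹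
        ≤ Real.logb 2 (∑ a ∈ S, u a • (α a)⁻¹) := hJ
      _ ≤ Real.logb 2 ((ℓ:ℝ)/ε) :=
        Real.logb_le_logb_of_le one_lt_two hinner_pos hinner_le
  have hB : ∑ a ∈ S, w a * Real.logb 2 (α a)⁻¹ ≤ W * Real.logb 2 ((ℓ:ℝ)/ε) := by
    calc ∑ a ∈ S, w a * Real.logb 2 (α a)⁻¹
        = W * ∑ a ∈ S, u a * Real.logb 2 (α a)⁻¹ := by
          rw [Finset.mul_sum]
          apply Finset.sum_congr rfl
          intro a ha
          rw [hu]
          field_simp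
      _ ≤ W * Real.logb 2 ((ℓ:ℝ)/ε) := mul_le_mul_of_nonneg_left hJ2 hWpos.le
  have hA : ∑ a ∈ S, w a * Real.logb 2 ((t:ℝ) * α a) ≤ ∑ a, w a * ent (p a) := by
    calc ∑ a ∈ S, w a * Real.logb 2 ((t:ℝ) * α a)
        ≤ ∑ a ∈ S, w a * ent (p a) := Finset.sum_le_sum key1
      _ = ∑ a, w a * ent (p a) := by
          apply Finset.sum_subset (Finset.filter_subset _ _)
          intro x _ hx
          have : α x = 0 := by
            by_contra h
            exact hx (Finset.mem_filter.mpr ⟨Finset.mem_univ x, h⟩)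
          rw [hwzero x this, zero_mul]
  have htne : ((t:ℝ)) ≠ 0 := by
    have : (0:ℝ) < (t:ℝ) := by exact_mod_cast ht
    exact this.ne'
  have hsplit : ∑ a ∈ S, w a * Real.logb 2 ((t:ℝ) * α a)
      = W * Real.logb 2 t - ∑ a ∈ S, w a * Real.logb 2 (α a)⁻¹ := by
    have hterm : ∀ a ∈ S, w a * Real.logb 2 ((t:ℝ) * α a)
        = w a * Real.logb 2 t - w a * Real.logb 2 (α a)⁻¹ := by
      intro a ha
      rw [Real.logb_mul htne (hαpos a ha).ne', Real.logb_inv]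
      ring
    rw [Finset.sum_congr rfl hterm, Finset.sum_sub_distrib, ← Finset.sum_mul, hWS]
  rw [ge_iff_le, le_div_iff₀ hWpos]
  calc (Real.logb 2 t - Real.logb 2 ((ℓ:ℝ)/ε)) * W
      = W * Real.logb 2 t - W * Real.logb 2 ((ℓ:ℝ)/ε) := by ring
    _ ≤ W * Real.logb 2 t - ∑ a ∈ S, w a * Real.logb 2 (α a)⁻¹ := by linarith [hB]
    _ = ∑ a ∈ S, w a * Real.logb 2 ((t:ℝ) * α a) := hsplit.symm
    _ ≤ ∑ a, w a * ent (p a) := hA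
end

section
/- For any two probability distributions p and q of an n-tuple (X_1, ..., X_n) on a finite product space, TV(p, q) ≤ ∑_{i=1}^n E_{(X_1,...,X_{i-1}) ∼ p}[ TV( p(X_i | X_1,...,X_{i-1}), q(X_i | X_1,...,X_{i-1}) ) ]. -/
open Finset
open scoped Classical

variable {n : ℕ} {Ω : Fin n → Type*} [∀ i, Fintype (Ω i)]

/-- Marginal probability under `p` of agreeing with `x` on the first `i` coordinates. -/
noncomputable def margP (p : (∀ j, Ω j) → ℝ) (i : ℕ) (x : ∀ j, Ω j) : ℝ :=
  ∑ y : ∀ j, Ω j, if (∀ j : Fin n, (j : ℕ) < i → y j = x j) then p y else 0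

/-- Conditional probability under `p` that coordinate `i` equals `v`, given that the
first `i` coordinates agree with `x` (with the convention `0/0 = 0`). -/
noncomputable def condP (p : (∀ j, Ω j) → ℝ) (i : Fin n) (x : ∀ j, Ω j) (v : Ω i) : ℝ :=
  (∑ y : ∀ j, Ω j,
      if ((∀ j : Fin n, (j : ℕ) < (i : ℕ) → y j = x j) ∧ y i = v) then p y else 0) /
    margP p (i : ℕ) x

section aux

set_option linter.unusedSectionVars false
set_option linter.unusedVariables false

variable (p q : (∀ j, Ω j) → ℝ)

lemma margP_nonneg (hp : ∀ x, 0 ≤ p x) (i : ℕ) (x : ∀ j, Ω j) : 0 ≤ margP p i x := by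
  apply Finset.sum_nonneg
  intro y _
  split <;> simp [hp y]

lemma margP_zero (hpsum : ∑ x, p x = 1) (x : ∀ j, Ω j) : margP p 0 x = 1 := by
  simp [margP, hpsum]

lemma margP_last (x : ∀ j, Ω j) : margP p n x = p x := by
  unfold margP
  have : ∀ y : ∀ j, Ω j, (∀ j : Fin n, (j : ℕ) < n → y j = x j) ↔ y = x := by
    intro y
    constructor
    · intro h; funext j; exact h j j.isLt
    · intro h j _; rw [h]
  simp only [this]
  simp

lemma margP_succ_le (hp : ∀ x, 0 ≤ p x) (k : ℕ) (x : ∀ j, Ω j) :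
    margP p (k + 1) x ≤ margP p k x := by
  apply Finset.sum_le_sum
  intro y _
  by_cases h : ∀ j : Fin n, (j : ℕ) < k + 1 → y j = x j
  · rw [if_pos h, if_pos fun j hj => h j (hj.trans (Nat.lt_succ_self k))]
  · rw [if_neg h]
    split <;> simp [hp y]

lemma cond_succ_iff (k : ℕ) (hk : k < n) (x y : ∀ j, Ω j) :
    (∀ j : Fin n, (j : ℕ) < k + 1 → y j = x j) ↔
      (∀ j : Fin n, (j : ℕ) < k → y j = x j) ∧ y ⟨k, hk⟩ = x ⟨k, hk⟩ := by
  constructor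
  · intro h
    exact ⟨fun j hj => h j (hj.trans (Nat.lt_succ_self k)), h ⟨k, hk⟩ (Nat.lt_succ_self k)⟩
  · rintro ⟨h1, h2⟩ j hj
    rcases Nat.lt_succ_iff_lt_or_eq.mp hj with hj' | hj'
    · exact h1 j hj'
    · have : j = ⟨k, hk⟩ := Fin.ext hj'
      rw [this]; exact h2

lemma margP_succ (hp : ∀ x, 0 ≤ p x) (k : ℕ) (hk : k < n) (x : ∀ j, Ω j) :
    margP p (k + 1) x = margP p k x * condP p ⟨k, hk⟩ x (x ⟨k, hk⟩) := by
  have hnum : (∑ y : ∀ j, Ω j,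
      if ((∀ j : Fin n, (j : ℕ) < k → y j = x j) ∧ y ⟨k, hk⟩ = x ⟨k, hk⟩) then p y else 0)
      = margP p (k + 1) x := by
    unfold margP
    exact Finset.sum_congr rfl fun y _ => by
      rw [if_congr (cond_succ_iff k hk x y).symm rfl rfl]
  by_cases h : margP p k x = 0
  · have h1 : margP p (k+1) x = 0 :=
      le_antisymm (h ▸ margP_succ_le p hp k x) (margP_nonneg p hp _ x)
    simp [h1, h]
  · unfold condP
    simp only [hnum]
    rw [mul_comm, div_mul_cancel₀ _ h]

lemma condP_nonneg (hp : ∀ x, 0 ≤ p x) (i : Fin n) (x : ∀ j, Ω j) (v : Ω i) :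
    0 ≤ condP p i x v := by
  apply div_nonneg _ (margP_nonneg p hp _ x)
  apply Finset.sum_nonneg
  intro y _
  split <;> simp [hp y]

lemma condP_le_one (hp : ∀ x, 0 ≤ p x) (i : Fin n) (x : ∀ j, Ω j) (v : Ω i) :
    condP p i x v ≤ 1 := by
  apply div_le_one_of_le₀ _ (margP_nonneg p hp _ x)
  apply Finset.sum_le_sum
  intro y _
  by_cases h : (∀ j : Fin n, (j : ℕ) < (i : ℕ) → y j = x j) ∧ y i = v
  · rw [if_pos h, if_pos h.1]
  · rw [if_neg h]
    split <;> simp [hp y]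

lemma sum_condP_le_one (hp : ∀ x, 0 ≤ p x) (i : Fin n) (x : ∀ j, Ω j) :
    ∑ v : Ω i, condP p i x v ≤ 1 := by
  unfold condP
  rw [← Finset.sum_div]
  have : (∑ v : Ω i, ∑ y : ∀ j, Ω j,
      if ((∀ j : Fin n, (j : ℕ) < (i : ℕ) → y j = x j) ∧ y i = v) then p y else 0)
      = margP p (i : ℕ) x := by
    rw [Finset.sum_comm]
    unfold margP
    apply Finset.sum_congr rfl
    intro y _
    simp only [ite_and]
    by_cases h : ∀ j : Fin n, (j : ℕ) < (i : ℕ) → y j = x j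
    · simp [h]
    · simp [h]
  rw [this]
  rcases eq_or_ne (margP p (i : ℕ) x) 0 with h | h
  · simp [h]
  · rw [div_self h]

lemma margP_congr (i : ℕ) (x x' : ∀ j, Ω j) (h : ∀ j : Fin n, (j : ℕ) < i → x j = x' j) :
    margP p i x = margP p i x' := by
  unfold margP
  apply Finset.sum_congr rfl
  intro y _
  apply if_congr _ rfl rfl
  constructor
  · intro H j hj; exact (H j hj).trans (h j hj)
  · intro H j hj; exact (H j hj).trans (h j hj).symm

lemma condP_congr (i : Fin n) (x x' : ∀ j, Ω j) (v : Ω i)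
    (h : ∀ j : Fin n, (j : ℕ) < (i : ℕ) → x j = x' j) :
    condP p i x v = condP p i x' v := by
  unfold condP
  rw [margP_congr p _ x x' h]
  congr 1
  apply Finset.sum_congr rfl
  intro y _
  apply if_congr _ rfl rfl
  constructor
  · rintro ⟨H, H2⟩
    exact ⟨fun j hj => (H j hj).trans (h j hj), H2⟩
  · rintro ⟨H, H2⟩
    exact ⟨fun j hj => (H j hj).trans (h j hj).symm, H2⟩


/-- Tail product of conditionals of `q` from coordinate `m` onward. -/
noncomputable def tailQ (q : (∀ j, Ω j) → ℝ) (m : ℕ) (x : ∀ j, Ω j) : ℝ :=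
  ∏ j ∈ Finset.univ.filter (fun j : Fin n => m ≤ (j : ℕ)), condP q j x (x j)

lemma tailQ_nonneg (hq : ∀ x, 0 ≤ q x) (m : ℕ) (x : ∀ j, Ω j) : 0 ≤ tailQ q m x :=
  Finset.prod_nonneg fun j _ => condP_nonneg q hq j x (x j)

lemma tailQ_last (x : ∀ j, Ω j) : tailQ q n x = 1 := by
  unfold tailQ
  rw [Finset.filter_false_of_mem, Finset.prod_empty]
  intro j _
  exact Nat.not_le.mpr j.isLt

lemma filter_ge_eq_insert (m : ℕ) (hm : m < n) :
    (Finset.univ.filter (fun j : Fin n => m ≤ (j : ℕ)))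
      = insert ⟨m, hm⟩ (Finset.univ.filter (fun j : Fin n => m + 1 ≤ (j : ℕ))) := by
  ext j
  simp only [Finset.mem_filter, Finset.mem_univ, true_and, Finset.mem_insert]
  constructor
  · intro h
    rcases eq_or_lt_of_le h with h' | h'
    · left; exact Fin.ext h'.symm
    · right; exact h'
  · rintro (h | h)
    · rw [h]
    · exact (Nat.le_succ m).trans h

lemma tailQ_succ (m : ℕ) (hm : m < n) (x : ∀ j, Ω j) :
    tailQ q m x = condP q ⟨m, hm⟩ x (x ⟨m, hm⟩) * tailQ q (m + 1) x := by
  unfold tailQ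
  rw [filter_ge_eq_insert m hm, Finset.prod_insert]
  simp

lemma prefix_prod (hq : ∀ x, 0 ≤ q x) (hqsum : ∑ x, q x = 1) :
    ∀ m, m ≤ n → ∀ x : ∀ j, Ω j,
      (∏ j ∈ Finset.univ.filter (fun j : Fin n => (j : ℕ) < m), condP q j x (x j))
        = margP q m x := by
  intro m
  induction m with
  | zero =>
    intro _ x
    rw [margP_zero q hqsum, Finset.filter_false_of_mem, Finset.prod_empty]
    intro j _
    omega
  | succ m ih =>
    intro h x
    have hm : m < n := h
    have hfil : (Finset.univ.filter (fun j : Fin n => (j : ℕ) < m + 1))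
        = insert ⟨m, hm⟩ (Finset.univ.filter (fun j : Fin n => (j : ℕ) < m)) := by
      ext j
      simp only [Finset.mem_filter, Finset.mem_univ, true_and, Finset.mem_insert]
      constructor
      · intro hj
        rcases Nat.lt_succ_iff_lt_or_eq.mp hj with h' | h'
        · right; exact h'
        · left; exact Fin.ext h'
      · rintro (h' | h')
        · rw [h']; simp
        · omega
    rw [hfil, Finset.prod_insert (by simp), ih (le_of_lt hm), mul_comm,
      ← margP_succ q hq m hm]

lemma tailQ_zero_eq (hq : ∀ x, 0 ≤ q x) (hqsum : ∑ x, q x = 1) (x : ∀ j, Ω j) :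
    tailQ q 0 x = q x := by
  unfold tailQ
  rw [← margP_last q x, ← prefix_prod q hq hqsum n le_rfl x]
  apply Finset.prod_congr _ fun _ _ => rfl
  ext j
  simp [j.isLt]

/-- Sum over completions of a prefix of the tail product is at most 1. -/
lemma tailQ_sum_le (hq : ∀ x, 0 ≤ q x) :
    ∀ d m, m + d = n → ∀ z : ∀ j, Ω j,
      (∑ x : ∀ j, Ω j,
        if (∀ j : Fin n, (j : ℕ) < m → x j = z j) then tailQ q m x else 0) ≤ 1 := by
  intro d
  induction d with
  | zero =>
    intro m hm z
    have hmn : m = n := by omega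
    subst hmn
    have hcond : ∀ x : ∀ j, Ω j, (∀ j : Fin m, (j : ℕ) < m → x j = z j) ↔ x = z := by
      intro x
      constructor
      · intro h; funext j; exact h j j.isLt
      · intro h j _; rw [h]
    simp only [hcond]
    rw [Finset.sum_ite_eq' Finset.univ z (fun x => tailQ q m x)]
    simp [tailQ_last]
  | succ d ih =>
    intro m hm z
    have hmn : m < n := by omega
    calc (∑ x : ∀ j, Ω j,
        if (∀ j : Fin n, (j : ℕ) < m → x j = z j) then tailQ q m x else 0)
        = ∑ x : ∀ j, Ω j, if (∀ j : Fin n, (j : ℕ) < m → x j = z j) then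
            condP q ⟨m, hmn⟩ z (x ⟨m, hmn⟩) * tailQ q (m + 1) x else 0 := by
          apply Finset.sum_congr rfl
          intro x _
          by_cases h : ∀ j : Fin n, (j : ℕ) < m → x j = z j
          · rw [if_pos h, if_pos h, tailQ_succ q m hmn x,
              condP_congr q ⟨m, hmn⟩ x z _ h]
          · rw [if_neg h, if_neg h]
      _ = ∑ v : Ω ⟨m, hmn⟩, ∑ x : ∀ j, Ω j,
            if ((∀ j : Fin n, (j : ℕ) < m → x j = z j) ∧ x ⟨m, hmn⟩ = v) then
              condP q ⟨m, hmn⟩ z (x ⟨m, hmn⟩) * tailQ q (m + 1) x else 0 := by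
          rw [Finset.sum_comm]
          apply Finset.sum_congr rfl
          intro x _
          simp only [ite_and]
          by_cases h : ∀ j : Fin n, (j : ℕ) < m → x j = z j
          · simp [h, Finset.sum_ite_eq]
          · simp [h]
      _ ≤ ∑ v : Ω ⟨m, hmn⟩, condP q ⟨m, hmn⟩ z v * 1 := by
          apply Finset.sum_le_sum
          intro v _
          have hcond : ∀ x : ∀ j, Ω j,
              ((∀ j : Fin n, (j : ℕ) < m → x j = z j) ∧ x ⟨m, hmn⟩ = v) ↔
              (∀ j : Fin n, (j : ℕ) < m + 1 → x j = Function.update z ⟨m, hmn⟩ v j) := by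
            intro x
            constructor
            · rintro ⟨h1, h2⟩ j hj
              rcases Nat.lt_succ_iff_lt_or_eq.mp hj with h' | h'
              · rw [Function.update_of_ne (by intro hc; rw [hc] at h'; exact absurd h' (by simp))]
                exact h1 j h'
              · have : j = ⟨m, hmn⟩ := Fin.ext h'
                subst this
                rw [Function.update_self]
                exact h2
            · intro h
              constructor
              · intro j hj
                have := h j (by omega)
                rwa [Function.update_of_ne (by intro hc; rw [hc] at hj; exact absurd hj (by simp))] at this
              · have := h ⟨m, hmn⟩ (by simp)
                rwa [Function.update_self] at this
          have hx : (∑ x : ∀ j, Ω j,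
              if ((∀ j : Fin n, (j : ℕ) < m → x j = z j) ∧ x ⟨m, hmn⟩ = v) then
                condP q ⟨m, hmn⟩ z (x ⟨m, hmn⟩) * tailQ q (m + 1) x else 0)
              = condP q ⟨m, hmn⟩ z v * (∑ x : ∀ j, Ω j,
                  if (∀ j : Fin n, (j : ℕ) < m + 1 → x j = Function.update z ⟨m, hmn⟩ v j) then
                    tailQ q (m + 1) x else 0) := by
            rw [Finset.mul_sum]
            apply Finset.sum_congr rfl
            intro x _
            by_cases h : (∀ j : Fin n, (j : ℕ) < m → x j = z j) ∧ x ⟨m, hmn⟩ = v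
            · rw [if_pos h, if_pos ((hcond x).mp h), h.2]
            · rw [if_neg h, if_neg fun hc => h ((hcond x).mpr hc), mul_zero]
          rw [hx]
          apply mul_le_mul_of_nonneg_left _ (condP_nonneg q hq _ z v)
          exact ih (m + 1) (by omega) (Function.update z ⟨m, hmn⟩ v)
      _ ≤ 1 := by
          simp only [mul_one]
          exact sum_condP_le_one q hq ⟨m, hmn⟩ z

/-- The hybrid distribution: `p` on the first `k` coordinates, `q`-conditionals after. -/
noncomputable def hybrid (p q : (∀ j, Ω j) → ℝ) (k : ℕ) (x : ∀ j, Ω j) : ℝ :=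
  margP p k x * tailQ q k x

lemma step_bound (hp : ∀ x, 0 ≤ p x) (hq : ∀ x, 0 ≤ q x)
    (k : ℕ) (hk : k < n) :
    (∑ x : ∀ j, Ω j, |hybrid p q (k + 1) x - hybrid p q k x|)
      ≤ ∑ x : ∀ j, Ω j, p x *
          ∑ v : Ω ⟨k, hk⟩, |condP p ⟨k, hk⟩ x v - condP q ⟨k, hk⟩ x v| := by
  have habs : ∀ x : ∀ j, Ω j, |hybrid p q (k + 1) x - hybrid p q k x|
      = margP p k x * (|condP p ⟨k, hk⟩ x (x ⟨k, hk⟩) - condP q ⟨k, hk⟩ x (x ⟨k, hk⟩)|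
          * tailQ q (k + 1) x) := by
    intro x
    have : hybrid p q (k + 1) x - hybrid p q k x
        = margP p k x * ((condP p ⟨k, hk⟩ x (x ⟨k, hk⟩) - condP q ⟨k, hk⟩ x (x ⟨k, hk⟩))
            * tailQ q (k + 1) x) := by
      unfold hybrid
      rw [margP_succ p hp k hk, tailQ_succ q k hk]
      ring
    rw [this, abs_mul, abs_mul, abs_of_nonneg (margP_nonneg p hp k x),
      abs_of_nonneg (tailQ_nonneg q hq (k + 1) x)]
  calc (∑ x : ∀ j, Ω j, |hybrid p q (k + 1) x - hybrid p q k x|)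
      = ∑ x : ∀ j, Ω j, ∑ y : ∀ j, Ω j,
          (if (∀ j : Fin n, (j : ℕ) < k → y j = x j) then
            p y * (|condP p ⟨k, hk⟩ y (x ⟨k, hk⟩) - condP q ⟨k, hk⟩ y (x ⟨k, hk⟩)|
              * tailQ q (k + 1) x) else 0) := by
        apply Finset.sum_congr rfl
        intro x _
        rw [habs x]
        unfold margP
        rw [Finset.sum_mul]
        apply Finset.sum_congr rfl
        intro y _
        rw [ite_mul, zero_mul]
        by_cases h : ∀ j : Fin n, (j : ℕ) < k → y j = x j
        · rw [if_pos h, if_pos h,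
            condP_congr p ⟨k, hk⟩ x y _ (fun j hj => (h j hj).symm),
            condP_congr q ⟨k, hk⟩ x y _ (fun j hj => (h j hj).symm)]
        · rw [if_neg h, if_neg h]
    _ = ∑ y : ∀ j, Ω j, ∑ v : Ω ⟨k, hk⟩, ∑ x : ∀ j, Ω j,
          (if ((∀ j : Fin n, (j : ℕ) < k → x j = y j) ∧ x ⟨k, hk⟩ = v) then
            p y * (|condP p ⟨k, hk⟩ y v - condP q ⟨k, hk⟩ y v|
              * tailQ q (k + 1) x) else 0) := by
        rw [Finset.sum_comm]
        apply Finset.sum_congr rfl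
        intro y _
        rw [Finset.sum_comm]
        apply Finset.sum_congr rfl
        intro x _
        simp only [ite_and]
        by_cases h : ∀ j : Fin n, (j : ℕ) < k → y j = x j
        · have h' : ∀ j : Fin n, (j : ℕ) < k → x j = y j := fun j hj => (h j hj).symm
          rw [if_pos h]
          simp only [if_pos h']
          rw [Finset.sum_ite_eq Finset.univ (x ⟨k, hk⟩)
            (fun v => p y * (|condP p ⟨k, hk⟩ y v - condP q ⟨k, hk⟩ y v| * tailQ q (k + 1) x))]
          simp
        · have h' : ¬ ∀ j : Fin n, (j : ℕ) < k → x j = y j :=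
            fun hc => h fun j hj => (hc j hj).symm
          rw [if_neg h]
          simp [h']
    _ ≤ ∑ y : ∀ j, Ω j, ∑ v : Ω ⟨k, hk⟩,
          p y * |condP p ⟨k, hk⟩ y v - condP q ⟨k, hk⟩ y v| := by
        apply Finset.sum_le_sum
        intro y _
        apply Finset.sum_le_sum
        intro v _
        have hsplit : (∑ x : ∀ j, Ω j,
            (if ((∀ j : Fin n, (j : ℕ) < k → x j = y j) ∧ x ⟨k, hk⟩ = v) then
              p y * (|condP p ⟨k, hk⟩ y v - condP q ⟨k, hk⟩ y v|
                * tailQ q (k + 1) x) else 0))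
            = p y * |condP p ⟨k, hk⟩ y v - condP q ⟨k, hk⟩ y v| *
              ∑ x : ∀ j, Ω j,
                (if (∀ j : Fin n, (j : ℕ) < k + 1 → x j = Function.update y ⟨k, hk⟩ v j) then
                  tailQ q (k + 1) x else 0) := by
          rw [Finset.mul_sum]
          apply Finset.sum_congr rfl
          intro x _
          have hcond : ((∀ j : Fin n, (j : ℕ) < k → x j = y j) ∧ x ⟨k, hk⟩ = v) ↔
              (∀ j : Fin n, (j : ℕ) < k + 1 → x j = Function.update y ⟨k, hk⟩ v j) := by
            constructor
            · rintro ⟨h1, h2⟩ j hj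
              rcases Nat.lt_succ_iff_lt_or_eq.mp hj with h' | h'
              · rw [Function.update_of_ne (by intro hc; rw [hc] at h'; exact absurd h' (by simp))]
                exact h1 j h'
              · have : j = ⟨k, hk⟩ := Fin.ext h'
                subst this
                rw [Function.update_self]
                exact h2
            · intro h
              constructor
              · intro j hj
                have := h j (by omega)
                rwa [Function.update_of_ne
                  (by intro hc; rw [hc] at hj; exact absurd hj (by simp))] at this
              · have := h ⟨k, hk⟩ (by simp)
                rwa [Function.update_self] at this
          by_cases h : (∀ j : Fin n, (j : ℕ) < k → x j = y j) ∧ x ⟨k, hk⟩ = v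
          · rw [if_pos h, if_pos (hcond.mp h)]
            ring
          · rw [if_neg h, if_neg fun hc => h (hcond.mpr hc), mul_zero]
        rw [hsplit]
        have h1 : (∑ x : ∀ j, Ω j,
            (if (∀ j : Fin n, (j : ℕ) < k + 1 → x j = Function.update y ⟨k, hk⟩ v j) then
              tailQ q (k + 1) x else 0)) ≤ 1 :=
          tailQ_sum_le q hq (n - (k + 1)) (k + 1) (by omega) _
        have h2 : 0 ≤ p y * |condP p ⟨k, hk⟩ y v - condP q ⟨k, hk⟩ y v| :=
          mul_nonneg (hp y) (abs_nonneg _)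
        calc p y * |condP p ⟨k, hk⟩ y v - condP q ⟨k, hk⟩ y v| *
              ∑ x : ∀ j, Ω j,
                (if (∀ j : Fin n, (j : ℕ) < k + 1 → x j = Function.update y ⟨k, hk⟩ v j) then
                  tailQ q (k + 1) x else 0)
            ≤ p y * |condP p ⟨k, hk⟩ y v - condP q ⟨k, hk⟩ y v| * 1 :=
              mul_le_mul_of_nonneg_left h1 h2
          _ = p y * |condP p ⟨k, hk⟩ y v - condP q ⟨k, hk⟩ y v| := mul_one _
    _ = ∑ y : ∀ j, Ω j, p y * ∑ v : Ω ⟨k, hk⟩,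
          |condP p ⟨k, hk⟩ y v - condP q ⟨k, hk⟩ y v| := by
        apply Finset.sum_congr rfl
        intro y _
        rw [Finset.mul_sum]
end aux

/-- Chain rule bound for total variation distance: the TV distance between two
distributions of an `n`-tuple is at most the sum over coordinates of the expected
(under `p`) TV distance between conditional distributions given the prefix. -/
theorem tvd_le_sum_expected_cond_tvd
    (p q : (∀ j, Ω j) → ℝ)
    (hpnn : ∀ x, 0 ≤ p x) (hpsum : ∑ x, p x = 1)
    (hqnn : ∀ x, 0 ≤ q x) (hqsum : ∑ x, q x = 1) :
    (1 / 2) * ∑ x, |p x - q x|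
      ≤ ∑ i : Fin n, ∑ x, p x * ((1 / 2) * ∑ v : Ω i, |condP p i x v - condP q i x v|) := by
  set F : ℕ → ℝ := fun k =>
    if hk : k < n then
      ∑ x, p x * ((1 / 2) * ∑ v : Ω ⟨k, hk⟩,
        |condP p ⟨k, hk⟩ x v - condP q ⟨k, hk⟩ x v|)
    else 0 with hF
  have hRHS : (∑ i : Fin n, ∑ x, p x *
      ((1 / 2) * ∑ v : Ω i, |condP p i x v - condP q i x v|)) = ∑ k ∈ range n, F k := by
    rw [← Fin.sum_univ_eq_sum_range F]
    apply Finset.sum_congr rfl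
    intro i _
    rw [hF]
    simp only [dif_pos i.isLt, Fin.eta]
  rw [hRHS]
  have htel : ∀ x : ∀ j, Ω j, |p x - q x|
      ≤ ∑ k ∈ range n, |hybrid p q (k + 1) x - hybrid p q k x| := by
    intro x
    have h0 : hybrid p q 0 x = q x := by
      unfold hybrid
      rw [margP_zero p hpsum, tailQ_zero_eq q hqnn hqsum, one_mul]
    have hn : hybrid p q n x = p x := by
      unfold hybrid
      rw [margP_last, tailQ_last, mul_one]
    calc |p x - q x| = |∑ k ∈ range n, (hybrid p q (k + 1) x - hybrid p q k x)| := by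
          rw [Finset.sum_range_sub (fun k => hybrid p q k x), h0, hn]
      _ ≤ ∑ k ∈ range n, |hybrid p q (k + 1) x - hybrid p q k x| :=
          Finset.abs_sum_le_sum_abs _ _
  calc (1 / 2) * ∑ x, |p x - q x|
      ≤ (1 / 2) * ∑ x, ∑ k ∈ range n, |hybrid p q (k + 1) x - hybrid p q k x| := by
        apply mul_le_mul_of_nonneg_left _ (by norm_num)
        exact Finset.sum_le_sum fun x _ => htel x
    _ = (1 / 2) * ∑ k ∈ range n, ∑ x, |hybrid p q (k + 1) x - hybrid p q k x| := by
        rw [Finset.sum_comm]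
    _ ≤ ∑ k ∈ range n, F k := by
        rw [Finset.mul_sum]
        apply Finset.sum_le_sum
        intro k hk
        have hkn : k < n := Finset.mem_range.mp hk
        rw [hF]
        simp only [dif_pos hkn]
        calc (1 / 2) * ∑ x, |hybrid p q (k + 1) x - hybrid p q k x|
            ≤ (1 / 2) * ∑ x, p x *
                ∑ v : Ω ⟨k, hkn⟩, |condP p ⟨k, hkn⟩ x v - condP q ⟨k, hkn⟩ x v| := by
              apply mul_le_mul_of_nonneg_left (step_bound p q hpnn hqnn k hkn) (by norm_num)
          _ = ∑ x, p x * ((1 / 2) * ∑ v : Ω ⟨k, hkn⟩,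
                |condP p ⟨k, hkn⟩ x v - condP q ⟨k, hkn⟩ x v|) := by
              rw [Finset.mul_sum]
              apply Finset.sum_congr rfl
              intro x _
              ring
end

section
/- Let m, c ≥ 2 be integers. Then ∑_{T' ⊆ {2,...,2c−1} : ⌈T'/2⌉ = {1,...,c}\S} (−m)^{|T'|}/m^{|⌊T'/2⌋|} equals (m−1)^{c−1} + (−1)^c if S = ∅, and equals (−1)^{c−|S|} if S ⊆ {1,...,c} is nonempty. -/
open Finset

private noncomputable def wt (m : ℕ) (T : Finset ℕ) : ℝ :=
  (-(m : ℝ)) ^ T.card / (m : ℝ) ^ (T.image (fun i => i / 2)).card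

private noncomputable def G (m c : ℕ) (U : Finset ℕ) : ℝ :=
  ∑ T' ∈ (Finset.Icc 2 (2 * c - 1)).powerset.filter
      (fun T' => T'.image (fun i => (i + 1) / 2) = U), wt m T'

private lemma G_eq_sum_ite (m c : ℕ) (U : Finset ℕ) :
    G m c U = ∑ T ∈ (Finset.Icc 2 (2 * c - 1)).powerset,
      (if T.image (fun i => (i + 1) / 2) = U then wt m T else 0) := by
  rw [G, Finset.sum_filter]

private lemma wt_empty (m : ℕ) : wt m ∅ = 1 := by
  simp [wt]

private lemma ite_insert_split (a : ℕ) (s U : Finset ℕ) (x : ℝ) :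
    (if insert a s = U then x else 0)
      = if a ∈ U then ((if s = U then x else 0) + (if s = U.erase a then x else 0)) else 0 := by
  by_cases haU : a ∈ U
  · by_cases has : a ∈ s
    · rw [Finset.insert_eq_self.2 has]
      have h2 : s ≠ U.erase a := fun h => (Finset.notMem_erase a U) (h ▸ has)
      simp [haU, h2]
    · have h1 : s ≠ U := fun h => has (h ▸ haU)
      have hiff : insert a s = U ↔ s = U.erase a := by
        constructor
        · intro h
          rw [← h, Finset.erase_insert has]
        · intro h
          rw [h, Finset.insert_erase haU]
      simp only [haU, if_true, h1, if_false, zero_add]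
      by_cases h : s = U.erase a
      · rw [if_pos (hiff.2 h), if_pos h]
      · rw [if_neg (fun hh => h (hiff.1 hh)), if_neg h]
  · have hne : insert a s ≠ U := fun h => haU (h ▸ Finset.mem_insert_self a s)
    simp [haU, hne]

private lemma G_vanish (m c : ℕ) (U : Finset ℕ) (hU : ¬ U ⊆ Finset.Icc 1 c) :
    G m c U = 0 := by
  rw [G]
  apply Finset.sum_eq_zero
  intro T hT
  rw [Finset.mem_filter, Finset.mem_powerset] at hT
  exfalso
  apply hU
  rw [← hT.2]
  intro x hx
  rw [Finset.mem_image] at hx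
  obtain ⟨i, hi, rfl⟩ := hx
  have := hT.1 hi
  rw [Finset.mem_Icc] at this ⊢
  omega

private lemma G_one (m : ℕ) (U : Finset ℕ) :
    G m 1 U = if U = ∅ then 1 else 0 := by
  have h : Finset.Icc 2 (2 * 1 - 1) = (∅ : Finset ℕ) := by
    apply Finset.Icc_eq_empty; omega
  rw [G, h, Finset.powerset_empty, Finset.filter_singleton]
  by_cases hU : U = ∅
  · rw [if_pos hU, if_pos, Finset.sum_singleton, wt_empty]
    rw [Finset.image_empty, hU]
  · rw [if_neg hU, if_neg, Finset.sum_empty]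
    rw [Finset.image_empty]
    exact fun h => hU h.symm

private lemma sum_ite_neg (m c : ℕ) (W : Finset ℕ) :
    ∑ T ∈ (Finset.Icc 2 (2 * c - 1)).powerset,
      (if T.image (fun i => (i + 1) / 2) = W then -(wt m T) else 0) = -(G m c W) := by
  rw [G_eq_sum_ite, ← Finset.sum_neg_distrib]
  apply Finset.sum_congr rfl
  intro T _
  split <;> simp

private lemma sum_ite_mul (m c : ℕ) (W : Finset ℕ) :
    ∑ T ∈ (Finset.Icc 2 (2 * c - 1)).powerset,
      (if T.image (fun i => (i + 1) / 2) = W then (m : ℝ) * wt m T else 0)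
      = (m : ℝ) * G m c W := by
  rw [G_eq_sum_ite, Finset.mul_sum]
  apply Finset.sum_congr rfl
  intro T _
  split <;> simp

private lemma floor_notMem (c : ℕ) (T : Finset ℕ) (hT : T ⊆ Finset.Icc 2 (2 * c - 1)) :
    c ∉ T.image (fun i => i / 2) := by
  intro h
  rw [Finset.mem_image] at h
  obtain ⟨i, hi, hei⟩ := h
  have := hT hi
  rw [Finset.mem_Icc] at this
  omega

private lemma G_step (m c : ℕ) (hm : (m : ℝ) ≠ 0) (hc : 1 ≤ c) (U : Finset ℕ) :
    G m (c + 1) U = G m c U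
      + (if c ∈ U then -(G m c U + G m c (U.erase c)) else 0)
      + (if c + 1 ∈ U then -(G m c U + G m c (U.erase (c + 1))) else 0)
      + (if c + 1 ∈ U then
           ((if c ∈ U then (m : ℝ) * (G m c U + G m c (U.erase c)) else 0)
            + (if c ∈ U.erase (c + 1) then
                (m : ℝ) * (G m c (U.erase (c + 1)) + G m c ((U.erase (c + 1)).erase c)) else 0))
         else 0) := by
  have hIcc : Finset.Icc 2 (2 * (c + 1) - 1)
      = insert (2 * c + 1) (insert (2 * c) (Finset.Icc 2 (2 * c - 1))) := by
    ext x
    simp only [Finset.mem_Icc, Finset.mem_insert]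
    omega
  have h2c : (2 * c) ∉ Finset.Icc 2 (2 * c - 1) := by
    rw [Finset.mem_Icc]; omega
  have h2c1 : (2 * c + 1) ∉ insert (2 * c) (Finset.Icc 2 (2 * c - 1)) := by
    rw [Finset.mem_insert, Finset.mem_Icc]; omega
  have hmemT : ∀ T ∈ (Finset.Icc 2 (2 * c - 1)).powerset,
      2 * c ∉ T ∧ 2 * c + 1 ∉ T ∧ c ∉ T.image (fun i => i / 2) := by
    intro T hT
    rw [Finset.mem_powerset] at hT
    refine ⟨fun h => h2c (hT h), fun h => ?_, floor_notMem c T hT⟩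
    have := hT h
    rw [Finset.mem_Icc] at this
    omega
  rw [G_eq_sum_ite, hIcc]
  rw [Finset.sum_powerset_insert h2c1, Finset.sum_powerset_insert h2c,
    Finset.sum_powerset_insert h2c]
  have hA : ∑ T ∈ (Finset.Icc 2 (2 * c - 1)).powerset,
      (if T.image (fun i => (i + 1) / 2) = U then wt m T else 0) = G m c U :=
    (G_eq_sum_ite m c U).symm
  -- Sum B : insert (2*c)
  have hBpt : ∀ T ∈ (Finset.Icc 2 (2 * c - 1)).powerset,
      (if (insert (2 * c) T).image (fun i => (i + 1) / 2) = U
        then wt m (insert (2 * c) T) else 0)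
      = if c ∈ U then
          ((if T.image (fun i => (i + 1) / 2) = U then -(wt m T) else 0)
           + (if T.image (fun i => (i + 1) / 2) = U.erase c then -(wt m T) else 0))
        else 0 := by
    intro T hT
    obtain ⟨hT1, hT2, hT3⟩ := hmemT T hT
    have himg : (insert (2 * c) T).image (fun i => (i + 1) / 2)
        = insert c (T.image (fun i => (i + 1) / 2)) := by
      rw [Finset.image_insert]
      congr 1
      omega
    have hwt : wt m (insert (2 * c) T) = -(wt m T) := by
      rw [wt, wt, Finset.image_insert]
      have h1 : (2 * c) / 2 = c := by omega
      rw [h1, Finset.card_insert_of_notMem hT1, Finset.card_insert_of_notMem hT3,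
        pow_succ, pow_succ]
      field_simp
    rw [himg, hwt, ite_insert_split]
  have hB : ∑ T ∈ (Finset.Icc 2 (2 * c - 1)).powerset,
      (if (insert (2 * c) T).image (fun i => (i + 1) / 2) = U
        then wt m (insert (2 * c) T) else 0)
      = if c ∈ U then -(G m c U + G m c (U.erase c)) else 0 := by
    rw [Finset.sum_congr rfl hBpt]
    by_cases hcU : c ∈ U
    · simp only [hcU, if_true]
      rw [Finset.sum_add_distrib, sum_ite_neg, sum_ite_neg]
      ring
    · simp only [hcU, if_false, Finset.sum_const_zero]
  -- Sum C : insert (2*c+1)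
  have hCpt : ∀ T ∈ (Finset.Icc 2 (2 * c - 1)).powerset,
      (if (insert (2 * c + 1) T).image (fun i => (i + 1) / 2) = U
        then wt m (insert (2 * c + 1) T) else 0)
      = if c + 1 ∈ U then
          ((if T.image (fun i => (i + 1) / 2) = U then -(wt m T) else 0)
           + (if T.image (fun i => (i + 1) / 2) = U.erase (c + 1) then -(wt m T) else 0))
        else 0 := by
    intro T hT
    obtain ⟨hT1, hT2, hT3⟩ := hmemT T hT
    have himg : (insert (2 * c + 1) T).image (fun i => (i + 1) / 2)
        = insert (c + 1) (T.image (fun i => (i + 1) / 2)) := by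
      rw [Finset.image_insert]
      congr 1
      omega
    have hwt : wt m (insert (2 * c + 1) T) = -(wt m T) := by
      rw [wt, wt, Finset.image_insert]
      have h1 : (2 * c + 1) / 2 = c := by omega
      rw [h1, Finset.card_insert_of_notMem hT2, Finset.card_insert_of_notMem hT3,
        pow_succ, pow_succ]
      field_simp
    rw [himg, hwt, ite_insert_split]
  have hC : ∑ T ∈ (Finset.Icc 2 (2 * c - 1)).powerset,
      (if (insert (2 * c + 1) T).image (fun i => (i + 1) / 2) = U
        then wt m (insert (2 * c + 1) T) else 0)
      = if c + 1 ∈ U then -(G m c U + G m c (U.erase (c + 1))) else 0 := by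
    rw [Finset.sum_congr rfl hCpt]
    by_cases hcU : c + 1 ∈ U
    · simp only [hcU, if_true]
      rw [Finset.sum_add_distrib, sum_ite_neg, sum_ite_neg]
      ring
    · simp only [hcU, if_false, Finset.sum_const_zero]
  -- Sum D : insert both
  have hDpt : ∀ T ∈ (Finset.Icc 2 (2 * c - 1)).powerset,
      (if (insert (2 * c + 1) (insert (2 * c) T)).image (fun i => (i + 1) / 2) = U
        then wt m (insert (2 * c + 1) (insert (2 * c) T)) else 0)
      = if c + 1 ∈ U then
          ((if c ∈ U then
              ((if T.image (fun i => (i + 1) / 2) = U then (m : ℝ) * wt m T else 0)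
               + (if T.image (fun i => (i + 1) / 2) = U.erase c then (m : ℝ) * wt m T else 0))
            else 0)
           + (if c ∈ U.erase (c + 1) then
              ((if T.image (fun i => (i + 1) / 2) = U.erase (c + 1)
                  then (m : ℝ) * wt m T else 0)
               + (if T.image (fun i => (i + 1) / 2) = (U.erase (c + 1)).erase c
                  then (m : ℝ) * wt m T else 0))
            else 0))
        else 0 := by
    intro T hT
    obtain ⟨hT1, hT2, hT3⟩ := hmemT T hT
    have h2c1T : 2 * c + 1 ∉ insert (2 * c) T := by
      rw [Finset.mem_insert]
      push_neg
      exact ⟨by omega, hT2⟩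
    have himg : (insert (2 * c + 1) (insert (2 * c) T)).image (fun i => (i + 1) / 2)
        = insert (c + 1) (insert c (T.image (fun i => (i + 1) / 2))) := by
      rw [Finset.image_insert, Finset.image_insert]
      have h1 : (2 * c + 1 + 1) / 2 = c + 1 := by omega
      have h2 : (2 * c + 1) / 2 = c := by omega
      rw [h1, h2]
    have hwt : wt m (insert (2 * c + 1) (insert (2 * c) T)) = (m : ℝ) * wt m T := by
      rw [wt, wt, Finset.image_insert, Finset.image_insert]
      have h1 : (2 * c + 1) / 2 = c := by omega
      have h2 : (2 * c) / 2 = c := by omega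
      rw [h1, h2, Finset.insert_idem]
      rw [Finset.card_insert_of_notMem h2c1T, Finset.card_insert_of_notMem hT1,
        Finset.card_insert_of_notMem hT3, pow_succ, pow_succ, pow_succ]
      field_simp
    rw [himg, hwt, ite_insert_split, ite_insert_split, ite_insert_split]
  have hD : ∑ T ∈ (Finset.Icc 2 (2 * c - 1)).powerset,
      (if (insert (2 * c + 1) (insert (2 * c) T)).image (fun i => (i + 1) / 2) = U
        then wt m (insert (2 * c + 1) (insert (2 * c) T)) else 0)
      = if c + 1 ∈ U then
           ((if c ∈ U then (m : ℝ) * (G m c U + G m c (U.erase c)) else 0)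
            + (if c ∈ U.erase (c + 1) then
                (m : ℝ) * (G m c (U.erase (c + 1)) + G m c ((U.erase (c + 1)).erase c)) else 0))
         else 0 := by
    rw [Finset.sum_congr rfl hDpt]
    by_cases hc1U : c + 1 ∈ U
    · simp only [hc1U, if_true]
      rw [Finset.sum_add_distrib]
      congr 1
      · by_cases hcU : c ∈ U
        · simp only [hcU, if_true]
          rw [Finset.sum_add_distrib, sum_ite_mul, sum_ite_mul]
          ring
        · simp only [hcU, if_false, Finset.sum_const_zero]
      · by_cases hcU : c ∈ U.erase (c + 1)
        · simp only [hcU, if_true]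
          rw [Finset.sum_add_distrib, sum_ite_mul, sum_ite_mul]
          ring
        · simp only [hcU, if_false, Finset.sum_const_zero]
    · simp only [hc1U, if_false, Finset.sum_const_zero]
  rw [hA, hB, hC, hD]
  ring

private noncomputable def V (m c : ℕ) (U : Finset ℕ) : ℝ :=
  if U = Finset.Icc 1 c then ((m : ℝ) - 1) ^ (c - 1) + (-1 : ℝ) ^ c else (-1 : ℝ) ^ U.card

private lemma G_eq_V (m : ℕ) (hm : 2 ≤ m) :
    ∀ c, 1 ≤ c → ∀ U, U ⊆ Finset.Icc 1 c → G m c U = V m c U := by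
  have hm0 : (m : ℝ) ≠ 0 := by
    simp only [ne_eq, Nat.cast_eq_zero]
    omega
  intro c hc
  induction c, hc using Nat.le_induction with
  | base =>
    intro U hU
    rw [G_one]
    rw [Finset.Icc_self] at hU
    rcases Finset.subset_singleton_iff.1 hU with rfl | rfl
    · rw [if_pos rfl, V, if_neg (by rw [Finset.Icc_self]; exact fun h => Finset.singleton_ne_empty 1 h.symm), Finset.card_empty, pow_zero]
    · rw [if_neg (by simp), V, if_pos (by rw [Finset.Icc_self])]
      simp
  | succ c hc IH =>
    intro U hU
    rw [G_step m c hm0 hc U]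
    have hUc : ∀ x ∈ U, x ∈ Finset.Icc 1 (c + 1) := fun x hx => hU hx
    by_cases hcU : c ∈ U <;> by_cases hc1U : c + 1 ∈ U
    · -- case (d): both in U
      have hGU : G m c U = 0 := by
        apply G_vanish
        intro h
        have := h hc1U
        rw [Finset.mem_Icc] at this
        omega
      have hGUec : G m c (U.erase c) = 0 := by
        apply G_vanish
        intro h
        have := h (Finset.mem_erase.2 ⟨by omega, hc1U⟩)
        rw [Finset.mem_Icc] at this
        omega
      have hcU' : c ∈ U.erase (c + 1) := Finset.mem_erase.2 ⟨by omega, hcU⟩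
      have hU'sub : U.erase (c + 1) ⊆ Finset.Icc 1 c := by
        intro x hx
        rw [Finset.mem_erase] at hx
        have := hUc x hx.2
        rw [Finset.mem_Icc] at this ⊢
        omega
      have hU''sub : (U.erase (c + 1)).erase c ⊆ Finset.Icc 1 c :=
        (Finset.erase_subset _ _).trans hU'sub
      rw [if_pos hcU, if_pos hc1U, if_pos hc1U, if_pos hcU, if_pos hcU',
        hGU, hGUec, IH _ hU'sub, IH _ hU''sub]
      have hcne : (U.erase (c + 1)).erase c ≠ Finset.Icc 1 c := by
        intro h
        have : c ∈ (U.erase (c + 1)).erase c := by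
          rw [h, Finset.mem_Icc]; omega
        exact (Finset.notMem_erase c _) this
      by_cases hfull : U = Finset.Icc 1 (c + 1)
      · have hU' : U.erase (c + 1) = Finset.Icc 1 c := by
          rw [hfull]
          ext x
          rw [Finset.mem_erase, Finset.mem_Icc, Finset.mem_Icc]
          omega
        have hcard : ((U.erase (c + 1)).erase c).card = c - 1 := by
          rw [Finset.card_erase_of_mem hcU', hU', Nat.card_Icc]
          omega
        simp only [V]
        rw [if_pos hfull, if_pos hU', if_neg hcne, hcard]
        obtain ⟨k, rfl⟩ : ∃ k, c = k + 1 := ⟨c - 1, by omega⟩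
        simp only [Nat.add_sub_cancel, pow_succ]
        ring
      · have hU'ne : U.erase (c + 1) ≠ Finset.Icc 1 c := by
          intro h
          apply hfull
          have := Finset.insert_erase hc1U
          rw [h] at this
          rw [← this]
          ext x
          rw [Finset.mem_insert, Finset.mem_Icc, Finset.mem_Icc]
          omega
        have hcard2 : 2 ≤ U.card := by
          have hsub : ({c, c + 1} : Finset ℕ) ⊆ U := by
            intro x hx
            rcases Finset.mem_insert.1 hx with rfl | hx
            · exact hcU
            · rw [Finset.mem_singleton] at hx
              exact hx ▸ hc1U
          have := Finset.card_le_card hsub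
          rwa [Finset.card_pair (by omega)] at this
        have hcard' : (U.erase (c + 1)).card = U.card - 1 :=
          Finset.card_erase_of_mem hc1U
        have hcard'' : ((U.erase (c + 1)).erase c).card = U.card - 2 := by
          rw [Finset.card_erase_of_mem hcU', hcard']
          omega
        simp only [V]
        rw [if_neg hU'ne, if_neg hcne, if_neg hfull, hcard', hcard'']
        obtain ⟨k, hk⟩ : ∃ k, U.card = k + 2 := ⟨U.card - 2, by omega⟩
        rw [hk]
        simp only [Nat.add_sub_cancel, show k + 2 - 1 = k + 1 from rfl, pow_succ]
        ring
    · -- case (b): c ∈ U, c+1 ∉ U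
      have hUsub : U ⊆ Finset.Icc 1 c := by
        intro x hx
        have := hUc x hx
        rw [Finset.mem_Icc] at this ⊢
        have : x ≠ c + 1 := fun h => hc1U (h ▸ hx)
        omega
      have hUesub : U.erase c ⊆ Finset.Icc 1 c := (Finset.erase_subset _ _).trans hUsub
      have hUene : U.erase c ≠ Finset.Icc 1 c := by
        intro h
        have : c ∈ U.erase c := by rw [h, Finset.mem_Icc]; omega
        exact (Finset.notMem_erase c U) this
      have hUne : U ≠ Finset.Icc 1 (c + 1) := by
        intro h
        apply hc1U
        rw [h, Finset.mem_Icc]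
        omega
      rw [if_pos hcU, if_neg hc1U, if_neg hc1U, IH _ hUesub]
      have hcard : (U.erase c).card = U.card - 1 := Finset.card_erase_of_mem hcU
      have hpos : 1 ≤ U.card := Finset.card_pos.2 ⟨c, hcU⟩
      simp only [V]
      rw [if_neg hUene, if_neg hUne, hcard]
      obtain ⟨k, hk⟩ : ∃ k, U.card = k + 1 := ⟨U.card - 1, by omega⟩
      rw [hk]
      simp only [Nat.add_sub_cancel, pow_succ]
      ring
    · -- case (c): c ∉ U, c+1 ∈ U
      have hU'sub : U.erase (c + 1) ⊆ Finset.Icc 1 c := by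
        intro x hx
        rw [Finset.mem_erase] at hx
        have := hUc x hx.2
        rw [Finset.mem_Icc] at this ⊢
        omega
      have hU'ne : U.erase (c + 1) ≠ Finset.Icc 1 c := by
        intro h
        apply hcU
        have : c ∈ U.erase (c + 1) := by rw [h, Finset.mem_Icc]; omega
        exact (Finset.mem_erase.1 this).2
      have hUne : U ≠ Finset.Icc 1 (c + 1) := by
        intro h
        apply hcU
        rw [h, Finset.mem_Icc]
        omega
      have hcU' : c ∉ U.erase (c + 1) := fun h => hcU (Finset.mem_erase.1 h).2
      rw [if_neg hcU, if_pos hc1U, if_pos hc1U, if_neg hcU, if_neg hcU',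
        IH _ hU'sub]
      have hcard : (U.erase (c + 1)).card = U.card - 1 := Finset.card_erase_of_mem hc1U
      have hpos : 1 ≤ U.card := Finset.card_pos.2 ⟨c + 1, hc1U⟩
      simp only [V]
      rw [if_neg hU'ne, if_neg hUne, hcard]
      obtain ⟨k, hk⟩ : ∃ k, U.card = k + 1 := ⟨U.card - 1, by omega⟩
      rw [hk]
      simp only [Nat.add_sub_cancel, pow_succ]
      ring
    · -- case (a): neither
      have hUsub : U ⊆ Finset.Icc 1 c := by
        intro x hx
        have := hUc x hx
        rw [Finset.mem_Icc] at this ⊢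
        have : x ≠ c + 1 := fun h => hc1U (h ▸ hx)
        omega
      have hUne : U ≠ Finset.Icc 1 c := by
        intro h
        apply hcU
        rw [h, Finset.mem_Icc]
        omega
      have hUne' : U ≠ Finset.Icc 1 (c + 1) := by
        intro h
        apply hc1U
        rw [h, Finset.mem_Icc]
        omega
      rw [if_neg hcU, if_neg hc1U, if_neg hc1U, IH _ hUsub]
      simp only [V]
      rw [if_neg hUne, if_neg hUne']
      ring

/-- The alternating sum over subsets `T' ⊆ {2,…,2c-1}` whose ceiling-half image is
`{1,…,c} \ S` of `(-m)^|T'| / m^|⌊T'/2⌋|` equals `(m-1)^(c-1) + (-1)^c` when `S = ∅`,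
and `(-1)^(c-|S|)` when `S ≠ ∅`. -/
theorem alternating_subset_sum (m c : ℕ) (hm : 2 ≤ m) (hc : 2 ≤ c)
    (S : Finset ℕ) (hS : S ⊆ Finset.Icc 1 c) :
    (S = ∅ →
      ∑ T' ∈ (Finset.Icc 2 (2 * c - 1)).powerset.filter
          (fun T' => T'.image (fun i => (i + 1) / 2) = Finset.Icc 1 c \ S),
        (-(m : ℝ)) ^ T'.card / (m : ℝ) ^ (T'.image (fun i => i / 2)).card
      = ((m : ℝ) - 1) ^ (c - 1) + (-1 : ℝ) ^ c)
    ∧ (S.Nonempty →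
      ∑ T' ∈ (Finset.Icc 2 (2 * c - 1)).powerset.filter
          (fun T' => T'.image (fun i => (i + 1) / 2) = Finset.Icc 1 c \ S),
        (-(m : ℝ)) ^ T'.card / (m : ℝ) ^ (T'.image (fun i => i / 2)).card
      = (-1 : ℝ) ^ (c - S.card)) := by
  have hG : ∑ T' ∈ (Finset.Icc 2 (2 * c - 1)).powerset.filter
          (fun T' => T'.image (fun i => (i + 1) / 2) = Finset.Icc 1 c \ S),
        (-(m : ℝ)) ^ T'.card / (m : ℝ) ^ (T'.image (fun i => i / 2)).card
      = G m c (Finset.Icc 1 c \ S) := rfl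
  have hGV := G_eq_V m hm c (by omega) (Finset.Icc 1 c \ S) (Finset.sdiff_subset)
  constructor
  · intro hSe
    rw [hG, hGV, hSe, Finset.sdiff_empty, V, if_pos rfl]
  · intro hSne
    obtain ⟨s, hs⟩ := hSne
    have hsIcc : s ∈ Finset.Icc 1 c := hS hs
    have hne : Finset.Icc 1 c \ S ≠ Finset.Icc 1 c := by
      intro h
      have : s ∈ Finset.Icc 1 c \ S := by rw [h]; exact hsIcc
      exact (Finset.mem_sdiff.1 this).2 hs
    rw [hG, hGV, V, if_neg hne]
    congr 1
    rw [Finset.card_sdiff_of_subset hS, Nat.card_Icc]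
    omega
end
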